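/- arXiv:1305.5797 — 3 statements merged into one kernel-verified Lean document; each statement's English description precedes it below -/
import Mathlib

section
/- Let u : K → ℝ be bounded and Lipschitz with respect to δ_TV with Lipschitz constant γ(u), and suppose that for every x ∈ K the function a ↦ u(h(x,a))·‖xM_a‖ is τ-measurable and τ-integrable. Define Tu(x) = ∫_A u(h(x,a)) ‖xM_a‖ τ(da). Then Tu is Lipschitz with respect to δ_TV with Lipschitz constant at most 3γ(u), i.e. |Tu(x) − Tu(y)| ≤ 3γ(u) · δ_TV(x, y) for all x, y ∈ K. -/
open MeasureTheory
open scoped NNReal ENNReal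

/-- The total variation distance between two (finite) measures:
`δ_TV(z₁,z₂) = sup_F (z₁(F) − z₂(F)) + sup_F (z₂(F) − z₁(F))`, `F` measurable. -/
noncomputable def tvDist {S : Type*} [MeasurableSpace S] (z₁ z₂ : Measure S) : ℝ :=
  sSup {d : ℝ | ∃ F : Set S, MeasurableSet F ∧ d = (z₁ F).toReal - (z₂ F).toReal} +
    sSup {d : ℝ | ∃ F : Set S, MeasurableSet F ∧ d = (z₂ F).toReal - (z₁ F).toReal}

/-- The measure `xM_a`, `xM_a(F) = ∫_S ∫_F m(s,t,a) λ(dt) x(ds)`. -/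
noncomputable def xMa {S A : Type*} [MeasurableSpace S] [MeasurableSpace A]
    (lam : Measure S) (m : S → S → A → ℝ≥0) (x : Measure S) (a : A) : Measure S :=
  x.bind fun s => lam.withDensity fun t => (m s t a : ℝ≥0∞)

/-- The map `h(x,a) = xM_a/‖xM_a‖` if `‖xM_a‖ > 0`, and `h(x,a) = x` otherwise. -/
noncomputable def hmap {S A : Type*} [MeasurableSpace S] [MeasurableSpace A]
    (lam : Measure S) (m : S → S → A → ℝ≥0) (x : Measure S) (a : A) : Measure S :=
  if 0 < xMa lam m x a Set.univ then (xMa lam m x a Set.univ)⁻¹ • xMa lam m x a else x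

section helpers

variable {S : Type*} [MeasurableSpace S]

lemma zero_mem_tvset (z₁ z₂ : Measure S) :
    (0:ℝ) ∈ {d : ℝ | ∃ F : Set S, MeasurableSet F ∧ d = (z₁ F).toReal - (z₂ F).toReal} :=
  ⟨∅, MeasurableSet.empty, by simp⟩

lemma el_tvset_le (z₁ z₂ : Measure S) [IsProbabilityMeasure z₁] {d : ℝ}
    (hd : d ∈ {d : ℝ | ∃ F : Set S, MeasurableSet F ∧ d = (z₁ F).toReal - (z₂ F).toReal}) :
    d ≤ 1 := by
  obtain ⟨F, hF, rfl⟩ := hd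
  have h1 : (z₁ F).toReal ≤ 1 := by
    have h := measure_mono (μ := z₁) (Set.subset_univ F)
    have := ENNReal.toReal_mono (measure_ne_top _ _) h
    simpa using this
  have h2 : (0:ℝ) ≤ (z₂ F).toReal := ENNReal.toReal_nonneg
  linarith

lemma bdd_tvset (z₁ z₂ : Measure S) [IsProbabilityMeasure z₁] :
    BddAbove {d : ℝ | ∃ F : Set S, MeasurableSet F ∧ d = (z₁ F).toReal - (z₂ F).toReal} :=
  ⟨1, fun _ hd => el_tvset_le z₁ z₂ hd⟩

lemma tvDist_le_two (z₁ z₂ : Measure S) [IsProbabilityMeasure z₁] [IsProbabilityMeasure z₂] :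
    tvDist z₁ z₂ ≤ 2 := by
  have h1 : sSup {d : ℝ | ∃ F : Set S, MeasurableSet F ∧ d = (z₁ F).toReal - (z₂ F).toReal} ≤ 1 :=
    csSup_le ⟨0, zero_mem_tvset z₁ z₂⟩ fun d hd => el_tvset_le z₁ z₂ hd
  have h2 : sSup {d : ℝ | ∃ F : Set S, MeasurableSet F ∧ d = (z₂ F).toReal - (z₁ F).toReal} ≤ 1 :=
    csSup_le ⟨0, zero_mem_tvset z₂ z₁⟩ fun d hd => el_tvset_le z₂ z₁ hd
  rw [tvDist]; linarith

lemma part_sSup_eq (lam : Measure S) {f g : S → ℝ≥0∞} (hf : Measurable f) (hg : Measurable g)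
    (hf1 : ∫⁻ s, f s ∂lam = 1) (hg1 : ∫⁻ s, g s ∂lam = 1) :
    sSup {d : ℝ | ∃ F : Set S, MeasurableSet F ∧
        d = (lam.withDensity f F).toReal - (lam.withDensity g F).toReal} =
    (∫⁻ s, (f s - g s) ∂lam).toReal := by
  haveI : IsProbabilityMeasure (lam.withDensity f) :=
    ⟨by rw [withDensity_apply _ MeasurableSet.univ, Measure.restrict_univ, hf1]⟩
  haveI : IsProbabilityMeasure (lam.withDensity g) :=
    ⟨by rw [withDensity_apply _ MeasurableSet.univ, Measure.restrict_univ, hg1]⟩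
  set I := ∫⁻ s, (f s - g s) ∂lam with hIdef
  have hIle : I ≤ 1 := by
    rw [← hf1]; exact lintegral_mono fun s => tsub_le_self
  have hI : I ≠ ∞ := (hIle.trans_lt (by norm_num)).ne
  apply le_antisymm
  · refine csSup_le ⟨0, zero_mem_tvset _ _⟩ ?_
    rintro d ⟨F, hF, rfl⟩
    rw [withDensity_apply _ hF, withDensity_apply _ hF]
    have hgF : ∫⁻ s in F, g s ∂lam ≠ ∞ := by
      refine ((setLIntegral_le_lintegral F g).trans_eq hg1).trans_lt (by norm_num) |>.ne
    have key : ∫⁻ s in F, f s ∂lam ≤ ∫⁻ s in F, g s ∂lam + I := by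
      calc ∫⁻ s in F, f s ∂lam ≤ ∫⁻ s in F, (g s + (f s - g s)) ∂lam :=
            lintegral_mono fun s => le_add_tsub
        _ = ∫⁻ s in F, g s ∂lam + ∫⁻ s in F, (f s - g s) ∂lam :=
            lintegral_add_left hg _
        _ ≤ ∫⁻ s in F, g s ∂lam + I := by
            gcongr; exact setLIntegral_le_lintegral F _
    have := ENNReal.toReal_mono (by exact ENNReal.add_ne_top.mpr ⟨hgF, hI⟩) key
    rw [ENNReal.toReal_add hgF hI] at this
    linarith
  · set F := {s | g s < f s} with hFdef
    have hF : MeasurableSet F := measurableSet_lt hg hf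
    have hgF : ∫⁻ s in F, g s ∂lam ≠ ∞ := by
      refine ((setLIntegral_le_lintegral F g).trans_eq hg1).trans_lt (by norm_num) |>.ne
    have e2 : ∫⁻ s in F, (f s - g s) ∂lam = I := by
      have hc : ∫⁻ s in Fᶜ, (f s - g s) ∂lam = 0 := by
        rw [setLIntegral_congr_fun hF.compl
          (fun s (hs : ¬ g s < f s) => tsub_eq_zero_of_le (not_lt.mp hs))]
        simp
      have := lintegral_add_compl (fun s => f s - g s) hF (μ := lam)
      rw [hc, add_zero] at this
      exact this
    have hsplit : ∫⁻ s in F, f s ∂lam = I + ∫⁻ s in F, g s ∂lam := by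
      have e1 : ∫⁻ s in F, f s ∂lam = ∫⁻ s in F, ((f s - g s) + g s) ∂lam :=
        setLIntegral_congr_fun hF
          (fun s (hs : g s < f s) => (tsub_add_cancel_of_le hs.le).symm)
      rw [e1, lintegral_add_right _ hg, e2]
    refine le_csSup (bdd_tvset _ _) ⟨F, hF, ?_⟩
    rw [withDensity_apply _ hF, withDensity_apply _ hF, hsplit, ENNReal.toReal_add hI hgF]
    ring

lemma tvDist_withDensity_eq (lam : Measure S) {f g : S → ℝ≥0∞} (hf : Measurable f)
    (hg : Measurable g) (hf1 : ∫⁻ s, f s ∂lam = 1) (hg1 : ∫⁻ s, g s ∂lam = 1) :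
    tvDist (lam.withDensity f) (lam.withDensity g) =
      (∫⁻ s, (f s - g s) ∂lam).toReal + (∫⁻ s, (g s - f s) ∂lam).toReal := by
  rw [tvDist, part_sSup_eq lam hf hg hf1 hg1, part_sSup_eq lam hg hf hg1 hf1]

end helpers

section aux
variable {S : Type*} [MeasurableSpace S] (lam : Measure S)

lemma sub_add_sub_lintegral_le {gx gy : S → ℝ≥0∞} (hgx : Measurable gx) (hgy : Measurable gy) :
    (∫⁻ t, gx t ∂lam - ∫⁻ t, gy t ∂lam) + (∫⁻ t, gy t ∂lam - ∫⁻ t, gx t ∂lam) ≤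
      ∫⁻ t, ((gx t - gy t) + (gy t - gx t)) ∂lam := by
  have h1 := lintegral_sub_le gy gx hgy (μ := lam)
  have h2 := lintegral_sub_le gx gy hgx (μ := lam)
  calc _ ≤ ∫⁻ t, (gx t - gy t) ∂lam + ∫⁻ t, (gy t - gx t) ∂lam := add_le_add h1 h2
    _ = _ := (lintegral_add_left (hgx.sub hgy) _).symm

lemma claimA_aux {gx gy : S → ℝ≥0∞} (hgx : Measurable gx) (hgy : Measurable gy)
    {cx cy φ : ℝ≥0∞}
    (hcx : ∫⁻ t, gx t ∂lam = cx) (hcy : ∫⁻ t, gy t ∂lam = cy)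
    (hφ : ∫⁻ t, ((gx t - gy t) + (gy t - gx t)) ∂lam = φ)
    (hcyne : cy ≠ ∞) (hcxne : cx ≠ ∞) (hφne : φ ≠ ∞) :
    |cx.toReal - cy.toReal| ≤ φ.toReal := by
  have hΔ : (cx - cy) + (cy - cx) ≤ φ := by
    rw [← hcx, ← hcy, ← hφ]; exact sub_add_sub_lintegral_le lam hgx hgy
  rw [abs_sub_le_iff]
  constructor
  · have h1 : cx ≤ φ + cy := tsub_le_iff_right.mp (le_trans le_self_add hΔ)
    have := ENNReal.toReal_mono (ENNReal.add_ne_top.mpr ⟨hφne, hcyne⟩) h1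
    rw [ENNReal.toReal_add hφne hcyne] at this
    linarith
  · have h1 : cy ≤ φ + cx := tsub_le_iff_right.mp (le_trans le_add_self hΔ)
    have := ENNReal.toReal_mono (ENNReal.add_ne_top.mpr ⟨hφne, hcxne⟩) h1
    rw [ENNReal.toReal_add hφne hcxne] at this
    linarith

lemma claimB_aux [SigmaFinite lam] {gx gy : S → ℝ≥0∞} (hgx : Measurable gx) (hgy : Measurable gy)
    {cx cy φ : ℝ≥0∞}
    (hcx : ∫⁻ t, gx t ∂lam = cx) (hcy : ∫⁻ t, gy t ∂lam = cy)
    (hφ : ∫⁻ t, ((gx t - gy t) + (gy t - gx t)) ∂lam = φ)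
    (hcxne : cx ≠ ∞) (hcyne : cy ≠ ∞) (hφne : φ ≠ ∞)
    (hx0 : cx ≠ 0) (h0 : cy ≠ 0) :
    tvDist (lam.withDensity (fun t => cx⁻¹ * gx t)) (lam.withDensity (fun t => cy⁻¹ * gy t)) *
      cy.toReal ≤ 2 * φ.toReal := by
  set k := cy * cx⁻¹ with hk
  have hgxfin : ∀ᵐ t ∂lam, gx t < ∞ := ae_lt_top hgx (hcx ▸ hcxne)
  have hφeq : φ = ∫⁻ t, (gx t - gy t) ∂lam + ∫⁻ t, (gy t - gx t) ∂lam := by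
    rw [← hφ]; exact (lintegral_add_left (hgx.sub hgy) _)
  have hΔ : (cy - cx) + (cx - cy) ≤ φ := by
    rw [add_comm, ← hcx, ← hcy, ← hφ]; exact sub_add_sub_lintegral_le lam hgx hgy
  have hf1' : ∫⁻ t, cx⁻¹ * gx t ∂lam = 1 := by
    rw [lintegral_const_mul _ hgx, hcx]; exact ENNReal.inv_mul_cancel hx0 hcxne
  have hg1' : ∫⁻ t, cy⁻¹ * gy t ∂lam = 1 := by
    rw [lintegral_const_mul _ hgy, hcy]; exact ENNReal.inv_mul_cancel h0 hcyne
  have htveq := tvDist_withDensity_eq lam (show Measurable (fun t => cx⁻¹ * gx t) from measurable_const.mul hgx)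
    (show Measurable (fun t => cy⁻¹ * gy t) from measurable_const.mul hgy)
    hf1' hg1'
  set Aε := ∫⁻ t, (cx⁻¹ * gx t - cy⁻¹ * gy t) ∂lam with hA
  set Bε := ∫⁻ t, (cy⁻¹ * gy t - cx⁻¹ * gx t) ∂lam with hB
  have hAle : Aε ≤ 1 := by
    rw [← hf1']; exact lintegral_mono fun t => tsub_le_self
  have hBle : Bε ≤ 1 := by
    rw [← hg1']; exact lintegral_mono fun t => tsub_le_self
  have hAne : Aε ≠ ∞ := (lt_of_le_of_lt hAle ENNReal.one_lt_top).ne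
  have hBne : Bε ≠ ∞ := (lt_of_le_of_lt hBle ENNReal.one_lt_top).ne
  have hkgx : ∫⁻ t, (k * gx t - gx t) ∂lam = cy - cx := by
    have e3 : ∫⁻ t, (k * gx t - gx t) ∂lam = ∫⁻ t, (k - 1) * gx t ∂lam := by
      refine lintegral_congr_ae ?_
      filter_upwards [hgxfin] with t ht
      rw [ENNReal.sub_mul (fun _ _ => ht.ne), one_mul]
    rw [e3, lintegral_const_mul _ hgx, hcx, ENNReal.sub_mul (fun _ _ => hcxne), one_mul,
      hk, mul_assoc, ENNReal.inv_mul_cancel hx0 hcxne, mul_one]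
  have hgxk : ∫⁻ t, (gx t - k * gx t) ∂lam = cx - cy := by
    have e3 : ∫⁻ t, (gx t - k * gx t) ∂lam = ∫⁻ t, (1 - k) * gx t ∂lam := by
      refine lintegral_congr_ae ?_
      filter_upwards [hgxfin] with t ht
      rw [ENNReal.sub_mul (fun _ _ => ht.ne), one_mul]
    rw [e3, lintegral_const_mul _ hgx, hcx, ENNReal.sub_mul (fun _ _ => hcxne), one_mul,
      hk, mul_assoc, ENNReal.inv_mul_cancel hx0 hcxne, mul_one]
  have hmulA : cy * Aε ≤ ∫⁻ t, (gx t - gy t) ∂lam + (cy - cx) := by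
    have e : cy * Aε = ∫⁻ t, (k * gx t - gy t) ∂lam := by
      rw [hA, ← lintegral_const_mul _ (show Measurable (fun t => cx⁻¹ * gx t - cy⁻¹ * gy t) from (measurable_const.mul hgx).sub (measurable_const.mul hgy))]
      refine lintegral_congr fun t => ?_
      rw [ENNReal.mul_sub (fun _ _ => hcyne)]
      congr 1
      · rw [← mul_assoc]
      · rw [← mul_assoc, ENNReal.mul_inv_cancel h0 hcyne, one_mul]
    rw [e]
    calc ∫⁻ t, (k * gx t - gy t) ∂lam
        ≤ ∫⁻ t, ((k * gx t - gx t) + (gx t - gy t)) ∂lam :=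
          lintegral_mono fun t => tsub_le_tsub_add_tsub
      _ = ∫⁻ t, (k * gx t - gx t) ∂lam + ∫⁻ t, (gx t - gy t) ∂lam :=
          lintegral_add_left ((measurable_const.mul hgx).sub hgx) _
      _ = ∫⁻ t, (gx t - gy t) ∂lam + (cy - cx) := by rw [hkgx, add_comm]
  have hmulB : cy * Bε ≤ ∫⁻ t, (gy t - gx t) ∂lam + (cx - cy) := by
    have e : cy * Bε = ∫⁻ t, (gy t - k * gx t) ∂lam := by
      rw [hB, ← lintegral_const_mul _ (show Measurable (fun t => cy⁻¹ * gy t - cx⁻¹ * gx t) from (measurable_const.mul hgy).sub (measurable_const.mul hgx))]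
      refine lintegral_congr fun t => ?_
      rw [ENNReal.mul_sub (fun _ _ => hcyne)]
      congr 1
      · rw [← mul_assoc, ENNReal.mul_inv_cancel h0 hcyne, one_mul]
      · rw [← mul_assoc]
    rw [e]
    calc ∫⁻ t, (gy t - k * gx t) ∂lam
        ≤ ∫⁻ t, ((gy t - gx t) + (gx t - k * gx t)) ∂lam :=
          lintegral_mono fun t => tsub_le_tsub_add_tsub
      _ = ∫⁻ t, (gy t - gx t) ∂lam + ∫⁻ t, (gx t - k * gx t) ∂lam :=
          lintegral_add_left (hgy.sub hgx) _
      _ = ∫⁻ t, (gy t - gx t) ∂lam + (cx - cy) := by rw [hgxk]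
  have hApB : cy * (Aε + Bε) ≤ 2 * φ := by
    rw [mul_add]
    calc cy * Aε + cy * Bε
        ≤ (∫⁻ t, (gx t - gy t) ∂lam + (cy - cx)) + (∫⁻ t, (gy t - gx t) ∂lam + (cx - cy)) :=
          add_le_add hmulA hmulB
      _ = (∫⁻ t, (gx t - gy t) ∂lam + ∫⁻ t, (gy t - gx t) ∂lam) + ((cy - cx) + (cx - cy)) := by
          ring
      _ ≤ φ + φ := add_le_add (le_of_eq hφeq.symm) hΔ
      _ = 2 * φ := (two_mul _).symm
  rw [htveq]
  have e2 : (Aε.toReal + Bε.toReal) * cy.toReal = (cy * (Aε + Bε)).toReal := by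
    rw [ENNReal.toReal_mul, ENNReal.toReal_add hAne hBne]; ring
  rw [e2]
  calc (cy * (Aε + Bε)).toReal ≤ (2 * φ).toReal :=
        ENNReal.toReal_mono (ENNReal.mul_ne_top (by norm_num) hφne) hApB
    _ = 2 * φ.toReal := by rw [ENNReal.toReal_mul, ENNReal.toReal_ofNat]

end aux

section xma

variable {S A : Type*} [MeasurableSpace S] [MeasurableSpace A]
  (lam : Measure S) [SigmaFinite lam] (m : S → S → A → ℝ≥0)

lemma mS_meas (hm : Measurable fun p : S × S × A => m p.1 p.2.1 p.2.2) (t : S) (a : A) :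
    Measurable fun s => (m s t a : ℝ≥0∞) := by fun_prop

lemma mT_meas (hm : Measurable fun p : S × S × A => m p.1 p.2.1 p.2.2) (s : S) (a : A) :
    Measurable fun t => (m s t a : ℝ≥0∞) := by fun_prop

lemma gz_meas (hm : Measurable fun p : S × S × A => m p.1 p.2.1 p.2.2)
    (z : Measure S) [SFinite z] :
    Measurable fun q : A × S => ∫⁻ s, (m s q.2 q.1 : ℝ≥0∞) ∂z := by
  apply Measurable.lintegral_prod_right' (f := fun q : (A × S) × S => (m q.2 q.1.2 q.1.1 : ℝ≥0∞))
  fun_prop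

lemma gz_meas' (hm : Measurable fun p : S × S × A => m p.1 p.2.1 p.2.2)
    (z : Measure S) [SFinite z] (a : A) :
    Measurable fun t => ∫⁻ s, (m s t a : ℝ≥0∞) ∂z :=
  (gz_meas m hm z).comp (measurable_const.prodMk measurable_id)

lemma xMa_eq (hm : Measurable fun p : S × S × A => m p.1 p.2.1 p.2.2)
    (z : Measure S) [SFinite z] (a : A) :
    xMa lam m z a = lam.withDensity (fun t => ∫⁻ s, (m s t a : ℝ≥0∞) ∂z) := by
  have hmeas : Measurable fun s => lam.withDensity fun t => (m s t a : ℝ≥0∞) := by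
    refine Measure.measurable_of_measurable_coe _ fun G hG => ?_
    simp_rw [withDensity_apply _ hG]
    exact Measurable.lintegral_prod_right'
      (f := fun q : S × S => (m q.1 q.2 a : ℝ≥0∞)) (ν := lam.restrict G) (by fun_prop)
  ext F hF
  rw [xMa, Measure.bind_apply hF hmeas.aemeasurable, withDensity_apply _ hF]
  simp_rw [withDensity_apply _ hF]
  exact lintegral_lintegral_swap
    (f := fun s t => (m s t a : ℝ≥0∞)) (μ := z) (ν := lam.restrict F) (by fun_prop)

lemma xMa_univ (hm : Measurable fun p : S × S × A => m p.1 p.2.1 p.2.2)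
    (z : Measure S) [SFinite z] (a : A) :
    xMa lam m z a Set.univ = ∫⁻ t, ∫⁻ s, (m s t a : ℝ≥0∞) ∂z ∂lam := by
  rw [xMa_eq lam m hm z a, withDensity_apply _ MeasurableSet.univ, Measure.restrict_univ]

omit [SigmaFinite lam] in
lemma hmap_zero (z : Measure S) (a : A) (h : xMa lam m z a Set.univ = 0) :
    hmap lam m z a = z := by
  simp [hmap, h]

lemma hmap_repr (hm : Measurable fun p : S × S × A => m p.1 p.2.1 p.2.2)
    (z : Measure S) [SFinite z] (a : A) (h0 : xMa lam m z a Set.univ ≠ 0) :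
    hmap lam m z a = lam.withDensity
      (fun t => (∫⁻ t', ∫⁻ s, (m s t' a : ℝ≥0∞) ∂z ∂lam)⁻¹ * ∫⁻ s, (m s t a : ℝ≥0∞) ∂z) := by
  have hu := xMa_univ lam m hm z a
  simp only [hmap]
  rw [if_pos (zero_lt_iff.mpr h0), hu, xMa_eq lam m hm z a,
    ← withDensity_smul _ (gz_meas' m hm z a)]
  rfl

lemma hmap_prob (hm : Measurable fun p : S × S × A => m p.1 p.2.1 p.2.2)
    (z : Measure S) (hz : IsProbabilityMeasure z) (hzl : z ≪ lam) (a : A)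
    (hfin : xMa lam m z a Set.univ ≠ ∞) :
    IsProbabilityMeasure (hmap lam m z a) ∧ hmap lam m z a ≪ lam := by
  by_cases h0 : xMa lam m z a Set.univ = 0
  · rw [hmap_zero lam m z a h0]; exact ⟨hz, hzl⟩
  · rw [hmap_repr lam m hm z a h0]
    refine ⟨⟨?_⟩, withDensity_absolutelyContinuous _ _⟩
    rw [withDensity_apply _ MeasurableSet.univ, Measure.restrict_univ,
      lintegral_const_mul _ (gz_meas' m hm z a), ← xMa_univ lam m hm z a]
    exact ENNReal.inv_mul_cancel h0 hfin

end xma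
/-- For a bounded Lipschitz `u : K → ℝ` (Lipschitz constant `γu` with
respect to `δ_TV`) whose transition integrand is integrable, the transition operator
`Tu(x) = ∫_A u(h(x,a)) ‖xM_a‖ τ(da)` is Lipschitz with constant at most `3γ(u)`:
`|Tu(x) − Tu(y)| ≤ 3γ(u) δ_TV(x,y)` for all `x, y ∈ K`. -/
theorem stmt_15 {S A : Type*}
    [MetricSpace S] [CompleteSpace S] [TopologicalSpace.SeparableSpace S]
    [MeasurableSpace S] [BorelSpace S]
    [MetricSpace A] [CompleteSpace A] [TopologicalSpace.SeparableSpace A]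
    [MeasurableSpace A] [BorelSpace A]
    (lam : Measure S) [SigmaFinite lam] (τ : Measure A) [SigmaFinite τ]
    (m : S → S → A → ℝ≥0)
    (hm : Measurable fun p : S × S × A => m p.1 p.2.1 p.2.2)
    (hnorm : ∀ s : S, ∫⁻ t, ∫⁻ a, (m s t a : ℝ≥0∞) ∂τ ∂lam = 1)
    (u : Measure S → ℝ) (γu : ℝ) (hγu : 0 ≤ γu)
    (hbd : ∃ Cu : ℝ, ∀ z : Measure S, IsProbabilityMeasure z → z ≪ lam → |u z| ≤ Cu)
    (hlip : ∀ z₁ z₂ : Measure S, IsProbabilityMeasure z₁ → z₁ ≪ lam →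
      IsProbabilityMeasure z₂ → z₂ ≪ lam → |u z₁ - u z₂| ≤ γu * tvDist z₁ z₂)
    (hint : ∀ z : Measure S, IsProbabilityMeasure z → z ≪ lam →
      Integrable (fun a => u (hmap lam m z a) * (xMa lam m z a Set.univ).toReal) τ)
    (x y : Measure S)
    (hx : IsProbabilityMeasure x) (hxl : x ≪ lam)
    (hy : IsProbabilityMeasure y) (hyl : y ≪ lam) :
    |(∫ a, u (hmap lam m x a) * (xMa lam m x a Set.univ).toReal ∂τ) -
        ∫ a, u (hmap lam m y a) * (xMa lam m y a Set.univ).toReal ∂τ| ≤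
      3 * γu * tvDist x y := by
  obtain ⟨Cu, hCu⟩ := hbd
  -- densities of x and y
  have hp : Measurable (x.rnDeriv lam) := Measure.measurable_rnDeriv x lam
  have hq : Measurable (y.rnDeriv lam) := Measure.measurable_rnDeriv y lam
  have hxd : lam.withDensity (x.rnDeriv lam) = x := Measure.withDensity_rnDeriv_eq x lam hxl
  have hyd : lam.withDensity (y.rnDeriv lam) = y := Measure.withDensity_rnDeriv_eq y lam hyl
  have hp1 : ∫⁻ s, x.rnDeriv lam s ∂lam = 1 := by
    have h1 : lam.withDensity (x.rnDeriv lam) Set.univ = 1 := by rw [hxd]; exact measure_univ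
    rwa [withDensity_apply _ MeasurableSet.univ, Measure.restrict_univ] at h1
  have hq1 : ∫⁻ s, y.rnDeriv lam s ∂lam = 1 := by
    have h1 : lam.withDensity (y.rnDeriv lam) Set.univ = 1 := by rw [hyd]; exact measure_univ
    rwa [withDensity_apply _ MeasurableSet.univ, Measure.restrict_univ] at h1
  have hpqne : ∫⁻ s, (x.rnDeriv lam s - y.rnDeriv lam s) ∂lam ≠ ∞ := by
    refine (lt_of_le_of_lt ?_ ENNReal.one_lt_top).ne
    rw [← hp1]; exact lintegral_mono fun s => tsub_le_self
  have hqpne : ∫⁻ s, (y.rnDeriv lam s - x.rnDeriv lam s) ∂lam ≠ ∞ := by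
    refine (lt_of_le_of_lt ?_ ENNReal.one_lt_top).ne
    rw [← hq1]; exact lintegral_mono fun s => tsub_le_self
  have hDsplit : ∫⁻ s, ((x.rnDeriv lam s - y.rnDeriv lam s)
        + (y.rnDeriv lam s - x.rnDeriv lam s)) ∂lam
      = ∫⁻ s, (x.rnDeriv lam s - y.rnDeriv lam s) ∂lam
        + ∫⁻ s, (y.rnDeriv lam s - x.rnDeriv lam s) ∂lam :=
    lintegral_add_left (hp.sub hq) _
  have hDne : ∫⁻ s, ((x.rnDeriv lam s - y.rnDeriv lam s)
      + (y.rnDeriv lam s - x.rnDeriv lam s)) ∂lam ≠ ∞ := by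
    rw [hDsplit]; exact ENNReal.add_ne_top.mpr ⟨hpqne, hqpne⟩
  have htvxy : tvDist x y = (∫⁻ s, ((x.rnDeriv lam s - y.rnDeriv lam s)
      + (y.rnDeriv lam s - x.rnDeriv lam s)) ∂lam).toReal := by
    conv_lhs => rw [← hxd, ← hyd]
    rw [tvDist_withDensity_eq lam hp hq hp1 hq1, hDsplit, ENNReal.toReal_add hpqne hqpne]
  -- measurability of the fiber densities and norms
  have hgxp : Measurable fun qq : A × S => ∫⁻ s, (m s qq.2 qq.1 : ℝ≥0∞) ∂x := gz_meas m hm x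
  have hgyp : Measurable fun qq : A × S => ∫⁻ s, (m s qq.2 qq.1 : ℝ≥0∞) ∂y := gz_meas m hm y
  have hgxa : ∀ a : A, Measurable fun t => ∫⁻ s, (m s t a : ℝ≥0∞) ∂x := gz_meas' m hm x
  have hgya : ∀ a : A, Measurable fun t => ∫⁻ s, (m s t a : ℝ≥0∞) ∂y := gz_meas' m hm y
  have hcxm : Measurable fun a : A => ∫⁻ t, ∫⁻ s, (m s t a : ℝ≥0∞) ∂x ∂lam :=
    Measurable.lintegral_prod_right' (f := fun qq : A × S => ∫⁻ s, (m s qq.2 qq.1 : ℝ≥0∞) ∂x) hgxp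
  have hcym : Measurable fun a : A => ∫⁻ t, ∫⁻ s, (m s t a : ℝ≥0∞) ∂y ∂lam :=
    Measurable.lintegral_prod_right' (f := fun qq : A × S => ∫⁻ s, (m s qq.2 qq.1 : ℝ≥0∞) ∂y) hgyp
  have hcxe : ∀ a, xMa lam m x a Set.univ = ∫⁻ t, ∫⁻ s, (m s t a : ℝ≥0∞) ∂x ∂lam :=
    fun a => xMa_univ lam m hm x a
  have hcye : ∀ a, xMa lam m y a Set.univ = ∫⁻ t, ∫⁻ s, (m s t a : ℝ≥0∞) ∂y ∂lam :=
    fun a => xMa_univ lam m hm y a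
  have hφm : Measurable fun a : A => ∫⁻ t, ((∫⁻ s, (m s t a : ℝ≥0∞) ∂x
      - ∫⁻ s, (m s t a : ℝ≥0∞) ∂y) + (∫⁻ s, (m s t a : ℝ≥0∞) ∂y
      - ∫⁻ s, (m s t a : ℝ≥0∞) ∂x)) ∂lam :=
    Measurable.lintegral_prod_right'
      (f := fun qq : A × S => (∫⁻ s, (m s qq.2 qq.1 : ℝ≥0∞) ∂x - ∫⁻ s, (m s qq.2 qq.1 : ℝ≥0∞) ∂y)
        + (∫⁻ s, (m s qq.2 qq.1 : ℝ≥0∞) ∂y - ∫⁻ s, (m s qq.2 qq.1 : ℝ≥0∞) ∂x))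
      ((hgxp.sub hgyp).add (hgyp.sub hgxp))
  -- density forms
  have hgxd : ∀ (a : A) (t : S), ∫⁻ s, (m s t a : ℝ≥0∞) ∂x
      = ∫⁻ s, (m s t a : ℝ≥0∞) * x.rnDeriv lam s ∂lam := by
    intro a t
    calc ∫⁻ s, (m s t a : ℝ≥0∞) ∂x
        = ∫⁻ s, (m s t a : ℝ≥0∞) ∂(lam.withDensity (x.rnDeriv lam)) := by rw [hxd]
      _ = ∫⁻ s, (x.rnDeriv lam * fun s' => (m s' t a : ℝ≥0∞)) s ∂lam :=
          lintegral_withDensity_eq_lintegral_mul lam hp (mS_meas m hm t a)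
      _ = _ := lintegral_congr fun s => mul_comm _ _
  have hgyd : ∀ (a : A) (t : S), ∫⁻ s, (m s t a : ℝ≥0∞) ∂y
      = ∫⁻ s, (m s t a : ℝ≥0∞) * y.rnDeriv lam s ∂lam := by
    intro a t
    calc ∫⁻ s, (m s t a : ℝ≥0∞) ∂y
        = ∫⁻ s, (m s t a : ℝ≥0∞) ∂(lam.withDensity (y.rnDeriv lam)) := by rw [hyd]
      _ = ∫⁻ s, (y.rnDeriv lam * fun s' => (m s' t a : ℝ≥0∞)) s ∂lam :=
          lintegral_withDensity_eq_lintegral_mul lam hq (mS_meas m hm t a)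
      _ = _ := lintegral_congr fun s => mul_comm _ _
  -- triple integral identity
  have htriple : ∀ w : S → ℝ≥0∞, Measurable w →
      ∫⁻ a, ∫⁻ t, ∫⁻ s, (m s t a : ℝ≥0∞) * w s ∂lam ∂lam ∂τ = ∫⁻ s, w s ∂lam := by
    intro w hw
    have hstep1 : (fun a : A => ∫⁻ t, ∫⁻ s, (m s t a : ℝ≥0∞) * w s ∂lam ∂lam)
        = fun a : A => ∫⁻ s, (∫⁻ t, (m s t a : ℝ≥0∞) ∂lam) * w s ∂lam := by
      funext a
      rw [lintegral_lintegral_swap (f := fun t s => (m s t a : ℝ≥0∞) * w s) (by fun_prop)]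
      exact lintegral_congr fun s => lintegral_mul_const _ (mT_meas m hm s a)
    rw [hstep1]
    have hH : Measurable fun qq : A × S => ∫⁻ t, (m qq.2 t qq.1 : ℝ≥0∞) ∂lam :=
      Measurable.lintegral_prod_right' (f := fun q : (A × S) × S => (m q.1.2 q.2 q.1.1 : ℝ≥0∞))
        (by fun_prop)
    rw [lintegral_lintegral_swap
      (f := fun (a : A) (s : S) => (∫⁻ t, (m s t a : ℝ≥0∞) ∂lam) * w s)
      ((hH.mul (hw.comp measurable_snd)).aemeasurable)]
    refine lintegral_congr fun s => ?_
    have hHs : Measurable fun a : A => ∫⁻ t, (m s t a : ℝ≥0∞) ∂lam :=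
      hH.comp (measurable_id.prodMk measurable_const)
    rw [lintegral_mul_const _ hHs,
      lintegral_lintegral_swap (f := fun (a : A) (t : S) => (m s t a : ℝ≥0∞)) (by fun_prop),
      hnorm s, one_mul]
  -- pointwise comparisons
  have keysub : ∀ (a : A) (t : S), ∫⁻ s, (m s t a : ℝ≥0∞) ∂x - ∫⁻ s, (m s t a : ℝ≥0∞) ∂y
      ≤ ∫⁻ s, (m s t a : ℝ≥0∞) * (x.rnDeriv lam s - y.rnDeriv lam s) ∂lam := by
    intro a t
    rw [hgxd a t, hgyd a t, tsub_le_iff_right,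
      ← lintegral_add_right _ (show Measurable (fun s => (m s t a : ℝ≥0∞) * y.rnDeriv lam s) from (mS_meas m hm t a).mul hq)]
    refine lintegral_mono fun s => ?_
    calc (m s t a : ℝ≥0∞) * x.rnDeriv lam s
        ≤ (m s t a : ℝ≥0∞) * ((x.rnDeriv lam s - y.rnDeriv lam s) + y.rnDeriv lam s) := by
          gcongr; exact le_tsub_add
      _ = _ := by rw [mul_add]
  have keysub' : ∀ (a : A) (t : S), ∫⁻ s, (m s t a : ℝ≥0∞) ∂y - ∫⁻ s, (m s t a : ℝ≥0∞) ∂x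
      ≤ ∫⁻ s, (m s t a : ℝ≥0∞) * (y.rnDeriv lam s - x.rnDeriv lam s) ∂lam := by
    intro a t
    rw [hgxd a t, hgyd a t, tsub_le_iff_right,
      ← lintegral_add_right _ (show Measurable (fun s => (m s t a : ℝ≥0∞) * x.rnDeriv lam s) from (mS_meas m hm t a).mul hp)]
    refine lintegral_mono fun s => ?_
    calc (m s t a : ℝ≥0∞) * y.rnDeriv lam s
        ≤ (m s t a : ℝ≥0∞) * ((y.rnDeriv lam s - x.rnDeriv lam s) + x.rnDeriv lam s) := by
          gcongr; exact le_tsub_add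
      _ = _ := by rw [mul_add]
  have hφint : ∫⁻ a, ∫⁻ t, ((∫⁻ s, (m s t a : ℝ≥0∞) ∂x - ∫⁻ s, (m s t a : ℝ≥0∞) ∂y)
      + (∫⁻ s, (m s t a : ℝ≥0∞) ∂y - ∫⁻ s, (m s t a : ℝ≥0∞) ∂x)) ∂lam ∂τ
      ≤ ∫⁻ s, ((x.rnDeriv lam s - y.rnDeriv lam s) + (y.rnDeriv lam s - x.rnDeriv lam s)) ∂lam := by
    calc _ ≤ ∫⁻ a, ∫⁻ t, ∫⁻ s, (m s t a : ℝ≥0∞) * ((x.rnDeriv lam s - y.rnDeriv lam s)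
          + (y.rnDeriv lam s - x.rnDeriv lam s)) ∂lam ∂lam ∂τ := by
          refine lintegral_mono fun a => lintegral_mono fun t => ?_
          calc (∫⁻ s, (m s t a : ℝ≥0∞) ∂x - ∫⁻ s, (m s t a : ℝ≥0∞) ∂y)
                + (∫⁻ s, (m s t a : ℝ≥0∞) ∂y - ∫⁻ s, (m s t a : ℝ≥0∞) ∂x)
              ≤ ∫⁻ s, (m s t a : ℝ≥0∞) * (x.rnDeriv lam s - y.rnDeriv lam s) ∂lam
                + ∫⁻ s, (m s t a : ℝ≥0∞) * (y.rnDeriv lam s - x.rnDeriv lam s) ∂lam :=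
                add_le_add (keysub a t) (keysub' a t)
            _ = ∫⁻ s, ((m s t a : ℝ≥0∞) * (x.rnDeriv lam s - y.rnDeriv lam s)
                + (m s t a : ℝ≥0∞) * (y.rnDeriv lam s - x.rnDeriv lam s)) ∂lam :=
                (lintegral_add_left ((mS_meas m hm t a).mul (hp.sub hq)) _).symm
            _ = _ := lintegral_congr fun s => (mul_add _ _ _).symm
      _ = _ := htriple _ ((hp.sub hq).add (hq.sub hp))
  have hφfin : ∀ᵐ a ∂τ, (∫⁻ t, ((∫⁻ s, (m s t a : ℝ≥0∞) ∂x - ∫⁻ s, (m s t a : ℝ≥0∞) ∂y)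
      + (∫⁻ s, (m s t a : ℝ≥0∞) ∂y - ∫⁻ s, (m s t a : ℝ≥0∞) ∂x)) ∂lam) < ∞ :=
    ae_lt_top hφm (lt_of_le_of_lt hφint hDne.lt_top).ne
  have hcx1 : ∫⁻ a, ∫⁻ t, ∫⁻ s, (m s t a : ℝ≥0∞) ∂x ∂lam ∂τ = 1 := by
    have e : (fun a : A => ∫⁻ t, ∫⁻ s, (m s t a : ℝ≥0∞) ∂x ∂lam)
        = fun a : A => ∫⁻ t, ∫⁻ s, (m s t a : ℝ≥0∞) * x.rnDeriv lam s ∂lam ∂lam := by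
      funext a; exact lintegral_congr fun t => hgxd a t
    rw [e, htriple _ hp, hp1]
  have hcy1 : ∫⁻ a, ∫⁻ t, ∫⁻ s, (m s t a : ℝ≥0∞) ∂y ∂lam ∂τ = 1 := by
    have e : (fun a : A => ∫⁻ t, ∫⁻ s, (m s t a : ℝ≥0∞) ∂y ∂lam)
        = fun a : A => ∫⁻ t, ∫⁻ s, (m s t a : ℝ≥0∞) * y.rnDeriv lam s ∂lam ∂lam := by
      funext a; exact lintegral_congr fun t => hgyd a t
    rw [e, htriple _ hq, hq1]
  have hcxfin : ∀ᵐ a ∂τ, (∫⁻ t, ∫⁻ s, (m s t a : ℝ≥0∞) ∂x ∂lam) < ∞ :=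
    ae_lt_top hcxm (by rw [hcx1]; exact ENNReal.one_ne_top)
  have hcyfin : ∀ᵐ a ∂τ, (∫⁻ t, ∫⁻ s, (m s t a : ℝ≥0∞) ∂y ∂lam) < ∞ :=
    ae_lt_top hcym (by rw [hcy1]; exact ENNReal.one_ne_top)
  -- the oscillation midpoint
  have hEx : u x ∈ {v : ℝ | ∃ z : Measure S, IsProbabilityMeasure z ∧ z ≪ lam ∧ u z = v} :=
    ⟨x, hx, hxl, rfl⟩
  have hEbddA : BddAbove {v : ℝ | ∃ z : Measure S, IsProbabilityMeasure z ∧ z ≪ lam ∧ u z = v} :=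
    ⟨Cu, by rintro v ⟨z, hz1, hz2, rfl⟩; exact (abs_le.mp (hCu z hz1 hz2)).2⟩
  have hEbddB : BddBelow {v : ℝ | ∃ z : Measure S, IsProbabilityMeasure z ∧ z ≪ lam ∧ u z = v} :=
    ⟨-Cu, by rintro v ⟨z, hz1, hz2, rfl⟩; exact (abs_le.mp (hCu z hz1 hz2)).1⟩
  have hss : sSup {v : ℝ | ∃ z : Measure S, IsProbabilityMeasure z ∧ z ≪ lam ∧ u z = v}
      ≤ sInf {v : ℝ | ∃ z : Measure S, IsProbabilityMeasure z ∧ z ≪ lam ∧ u z = v} + 2 * γu := by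
    refine csSup_le ⟨u x, hEx⟩ ?_
    rintro v ⟨z', hz1', hz2', rfl⟩
    have h1 : u z' - 2 * γu
        ≤ sInf {v : ℝ | ∃ z : Measure S, IsProbabilityMeasure z ∧ z ≪ lam ∧ u z = v} := by
      refine le_csInf ⟨u x, hEx⟩ ?_
      rintro v' ⟨z'', hz1'', hz2'', rfl⟩
      have h := hlip z' z'' hz1' hz2' hz1'' hz2''
      have h2 : tvDist z' z'' ≤ 2 := by
        haveI := hz1'; haveI := hz1''; exact tvDist_le_two z' z''
      have h3 : γu * tvDist z' z'' ≤ γu * 2 := mul_le_mul_of_nonneg_left h2 hγu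
      have h4 : u z' - u z'' ≤ |u z' - u z''| := le_abs_self _
      linarith
    linarith
  set c : ℝ := (sSup {v : ℝ | ∃ z : Measure S, IsProbabilityMeasure z ∧ z ≪ lam ∧ u z = v}
    + sInf {v : ℝ | ∃ z : Measure S, IsProbabilityMeasure z ∧ z ≪ lam ∧ u z = v}) / 2 with hc
  have hosc : ∀ z : Measure S, IsProbabilityMeasure z → z ≪ lam → |u z - c| ≤ γu := by
    intro z hz1 hz2
    have h5 := csInf_le hEbddB ⟨z, hz1, hz2, rfl⟩
    have h6 := le_csSup hEbddA ⟨z, hz1, hz2, rfl⟩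
    rw [abs_le, hc]
    constructor <;> [linarith; linarith]
  -- the per-a key bound
  have hkey : ∀ᵐ a ∂τ, ENNReal.ofReal
      ‖(u (hmap lam m x a) * (∫⁻ t, ∫⁻ s, (m s t a : ℝ≥0∞) ∂x ∂lam).toReal
        - u (hmap lam m y a) * (∫⁻ t, ∫⁻ s, (m s t a : ℝ≥0∞) ∂y ∂lam).toReal)
        - c * ((∫⁻ t, ∫⁻ s, (m s t a : ℝ≥0∞) ∂x ∂lam).toReal
          - (∫⁻ t, ∫⁻ s, (m s t a : ℝ≥0∞) ∂y ∂lam).toReal)‖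
      ≤ ENNReal.ofReal (3 * γu) * ∫⁻ t, ((∫⁻ s, (m s t a : ℝ≥0∞) ∂x - ∫⁻ s, (m s t a : ℝ≥0∞) ∂y)
        + (∫⁻ s, (m s t a : ℝ≥0∞) ∂y - ∫⁻ s, (m s t a : ℝ≥0∞) ∂x)) ∂lam := by
    filter_upwards [hcxfin, hcyfin, hφfin] with a hcxa hcya hφa
    have hprobx := hmap_prob lam m hm x hx hxl a (by rw [hcxe a]; exact hcxa.ne)
    have hproby := hmap_prob lam m hm y hy hyl a (by rw [hcye a]; exact hcya.ne)
    have claimA : |(∫⁻ t, ∫⁻ s, (m s t a : ℝ≥0∞) ∂x ∂lam).toReal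
        - (∫⁻ t, ∫⁻ s, (m s t a : ℝ≥0∞) ∂y ∂lam).toReal|
        ≤ (∫⁻ t, ((∫⁻ s, (m s t a : ℝ≥0∞) ∂x - ∫⁻ s, (m s t a : ℝ≥0∞) ∂y)
          + (∫⁻ s, (m s t a : ℝ≥0∞) ∂y - ∫⁻ s, (m s t a : ℝ≥0∞) ∂x)) ∂lam).toReal :=
      claimA_aux lam (hgxa a) (hgya a) rfl rfl rfl hcya.ne hcxa.ne hφa.ne
    have claimB : tvDist (hmap lam m x a) (hmap lam m y a)
        * (∫⁻ t, ∫⁻ s, (m s t a : ℝ≥0∞) ∂y ∂lam).toReal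
        ≤ 2 * (∫⁻ t, ((∫⁻ s, (m s t a : ℝ≥0∞) ∂x - ∫⁻ s, (m s t a : ℝ≥0∞) ∂y)
          + (∫⁻ s, (m s t a : ℝ≥0∞) ∂y - ∫⁻ s, (m s t a : ℝ≥0∞) ∂x)) ∂lam).toReal := by
      rcases eq_or_ne (∫⁻ t, ∫⁻ s, (m s t a : ℝ≥0∞) ∂y ∂lam) 0 with h0 | h0
      · rw [h0]; simp only [ENNReal.toReal_zero, mul_zero]; positivity
      rcases eq_or_ne (∫⁻ t, ∫⁻ s, (m s t a : ℝ≥0∞) ∂x ∂lam) 0 with hx0 | hx0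
      · have htv2 : tvDist (hmap lam m x a) (hmap lam m y a) ≤ 2 := by
          haveI := hprobx.1; haveI := hproby.1; exact tvDist_le_two _ _
        have hcyφ : (∫⁻ t, ∫⁻ s, (m s t a : ℝ≥0∞) ∂y ∂lam)
            ≤ ∫⁻ t, ((∫⁻ s, (m s t a : ℝ≥0∞) ∂x - ∫⁻ s, (m s t a : ℝ≥0∞) ∂y)
              + (∫⁻ s, (m s t a : ℝ≥0∞) ∂y - ∫⁻ s, (m s t a : ℝ≥0∞) ∂x)) ∂lam := by
          have h2 := le_trans le_add_self (sub_add_sub_lintegral_le lam (hgxa a) (hgya a))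
          rwa [hx0, tsub_zero] at h2
        have hcyΦ := ENNReal.toReal_mono hφa.ne hcyφ
        nlinarith [ENNReal.toReal_nonneg (a := ∫⁻ t, ∫⁻ s, (m s t a : ℝ≥0∞) ∂y ∂lam),
          mul_le_mul_of_nonneg_right htv2
            (ENNReal.toReal_nonneg (a := ∫⁻ t, ∫⁻ s, (m s t a : ℝ≥0∞) ∂y ∂lam))]
      · have hrx := hmap_repr lam m hm x a (by rw [hcxe a]; exact hx0)
        have hry := hmap_repr lam m hm y a (by rw [hcye a]; exact h0)
        rw [hrx, hry]
        exact claimB_aux lam (hgxa a) (hgya a) rfl rfl rfl hcxa.ne hcya.ne hφa.ne hx0 h0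
    have hUx : |u (hmap lam m x a) - c| ≤ γu := hosc _ hprobx.1 hprobx.2
    have hlipa := hlip _ _ hprobx.1 hprobx.2 hproby.1 hproby.2
    have hCy0 : 0 ≤ (∫⁻ t, ∫⁻ s, (m s t a : ℝ≥0∞) ∂y ∂lam).toReal := ENNReal.toReal_nonneg
    have habs : |(u (hmap lam m x a) * (∫⁻ t, ∫⁻ s, (m s t a : ℝ≥0∞) ∂x ∂lam).toReal
        - u (hmap lam m y a) * (∫⁻ t, ∫⁻ s, (m s t a : ℝ≥0∞) ∂y ∂lam).toReal)
        - c * ((∫⁻ t, ∫⁻ s, (m s t a : ℝ≥0∞) ∂x ∂lam).toReal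
          - (∫⁻ t, ∫⁻ s, (m s t a : ℝ≥0∞) ∂y ∂lam).toReal)|
        ≤ 3 * γu * (∫⁻ t, ((∫⁻ s, (m s t a : ℝ≥0∞) ∂x - ∫⁻ s, (m s t a : ℝ≥0∞) ∂y)
          + (∫⁻ s, (m s t a : ℝ≥0∞) ∂y - ∫⁻ s, (m s t a : ℝ≥0∞) ∂x)) ∂lam).toReal := by
      have hexp : (u (hmap lam m x a) * (∫⁻ t, ∫⁻ s, (m s t a : ℝ≥0∞) ∂x ∂lam).toReal
          - u (hmap lam m y a) * (∫⁻ t, ∫⁻ s, (m s t a : ℝ≥0∞) ∂y ∂lam).toReal)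
          - c * ((∫⁻ t, ∫⁻ s, (m s t a : ℝ≥0∞) ∂x ∂lam).toReal
            - (∫⁻ t, ∫⁻ s, (m s t a : ℝ≥0∞) ∂y ∂lam).toReal)
          = (u (hmap lam m x a) - c) * ((∫⁻ t, ∫⁻ s, (m s t a : ℝ≥0∞) ∂x ∂lam).toReal
            - (∫⁻ t, ∫⁻ s, (m s t a : ℝ≥0∞) ∂y ∂lam).toReal)
          + (u (hmap lam m x a) - u (hmap lam m y a))
            * (∫⁻ t, ∫⁻ s, (m s t a : ℝ≥0∞) ∂y ∂lam).toReal := by ring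
      rw [hexp]
      calc _ ≤ |(u (hmap lam m x a) - c) * ((∫⁻ t, ∫⁻ s, (m s t a : ℝ≥0∞) ∂x ∂lam).toReal
            - (∫⁻ t, ∫⁻ s, (m s t a : ℝ≥0∞) ∂y ∂lam).toReal)|
          + |(u (hmap lam m x a) - u (hmap lam m y a))
            * (∫⁻ t, ∫⁻ s, (m s t a : ℝ≥0∞) ∂y ∂lam).toReal| := abs_add_le _ _
        _ = |u (hmap lam m x a) - c| * |(∫⁻ t, ∫⁻ s, (m s t a : ℝ≥0∞) ∂x ∂lam).toReal
            - (∫⁻ t, ∫⁻ s, (m s t a : ℝ≥0∞) ∂y ∂lam).toReal|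
          + |u (hmap lam m x a) - u (hmap lam m y a)|
            * (∫⁻ t, ∫⁻ s, (m s t a : ℝ≥0∞) ∂y ∂lam).toReal := by
            rw [abs_mul, abs_mul, abs_of_nonneg hCy0]
        _ ≤ γu * (∫⁻ t, ((∫⁻ s, (m s t a : ℝ≥0∞) ∂x - ∫⁻ s, (m s t a : ℝ≥0∞) ∂y)
            + (∫⁻ s, (m s t a : ℝ≥0∞) ∂y - ∫⁻ s, (m s t a : ℝ≥0∞) ∂x)) ∂lam).toReal
          + γu * (tvDist (hmap lam m x a) (hmap lam m y a)
            * (∫⁻ t, ∫⁻ s, (m s t a : ℝ≥0∞) ∂y ∂lam).toReal) := by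
            refine add_le_add (mul_le_mul hUx claimA (abs_nonneg _) hγu) ?_
            calc |u (hmap lam m x a) - u (hmap lam m y a)|
                  * (∫⁻ t, ∫⁻ s, (m s t a : ℝ≥0∞) ∂y ∂lam).toReal
                ≤ (γu * tvDist (hmap lam m x a) (hmap lam m y a))
                  * (∫⁻ t, ∫⁻ s, (m s t a : ℝ≥0∞) ∂y ∂lam).toReal :=
                  mul_le_mul_of_nonneg_right hlipa hCy0
              _ = _ := by ring
        _ ≤ γu * (∫⁻ t, ((∫⁻ s, (m s t a : ℝ≥0∞) ∂x - ∫⁻ s, (m s t a : ℝ≥0∞) ∂y)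
            + (∫⁻ s, (m s t a : ℝ≥0∞) ∂y - ∫⁻ s, (m s t a : ℝ≥0∞) ∂x)) ∂lam).toReal
          + γu * (2 * (∫⁻ t, ((∫⁻ s, (m s t a : ℝ≥0∞) ∂x - ∫⁻ s, (m s t a : ℝ≥0∞) ∂y)
            + (∫⁻ s, (m s t a : ℝ≥0∞) ∂y - ∫⁻ s, (m s t a : ℝ≥0∞) ∂x)) ∂lam).toReal) :=
            add_le_add le_rfl (mul_le_mul_of_nonneg_left claimB hγu)
        _ = _ := by ring
    calc ENNReal.ofReal _ ≤ ENNReal.ofReal (3 * γu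
        * (∫⁻ t, ((∫⁻ s, (m s t a : ℝ≥0∞) ∂x - ∫⁻ s, (m s t a : ℝ≥0∞) ∂y)
          + (∫⁻ s, (m s t a : ℝ≥0∞) ∂y - ∫⁻ s, (m s t a : ℝ≥0∞) ∂x)) ∂lam).toReal) := by
          rw [Real.norm_eq_abs]; exact ENNReal.ofReal_le_ofReal habs
      _ = ENNReal.ofReal (3 * γu) * ENNReal.ofReal
          (∫⁻ t, ((∫⁻ s, (m s t a : ℝ≥0∞) ∂x - ∫⁻ s, (m s t a : ℝ≥0∞) ∂y)
          + (∫⁻ s, (m s t a : ℝ≥0∞) ∂y - ∫⁻ s, (m s t a : ℝ≥0∞) ∂x)) ∂lam).toReal :=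
          ENNReal.ofReal_mul (by positivity)
      _ ≤ _ := mul_le_mul_right ENNReal.ofReal_toReal_le _
  -- final assembly
  have hfx : (fun a => u (hmap lam m x a) * (xMa lam m x a Set.univ).toReal)
      = fun a => u (hmap lam m x a) * (∫⁻ t, ∫⁻ s, (m s t a : ℝ≥0∞) ∂x ∂lam).toReal :=
    funext fun a => by rw [hcxe a]
  have hfy : (fun a => u (hmap lam m y a) * (xMa lam m y a Set.univ).toReal)
      = fun a => u (hmap lam m y a) * (∫⁻ t, ∫⁻ s, (m s t a : ℝ≥0∞) ∂y ∂lam).toReal :=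
    funext fun a => by rw [hcye a]
  have hIx : Integrable
      (fun a => u (hmap lam m x a) * (∫⁻ t, ∫⁻ s, (m s t a : ℝ≥0∞) ∂x ∂lam).toReal) τ :=
    hfx ▸ hint x hx hxl
  have hIy : Integrable
      (fun a => u (hmap lam m y a) * (∫⁻ t, ∫⁻ s, (m s t a : ℝ≥0∞) ∂y ∂lam).toReal) τ :=
    hfy ▸ hint y hy hyl
  have hIcx : Integrable (fun a => (∫⁻ t, ∫⁻ s, (m s t a : ℝ≥0∞) ∂x ∂lam).toReal) τ :=
    integrable_toReal_of_lintegral_ne_top hcxm.aemeasurable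
      (by rw [hcx1]; exact ENNReal.one_ne_top)
  have hIcy : Integrable (fun a => (∫⁻ t, ∫⁻ s, (m s t a : ℝ≥0∞) ∂y ∂lam).toReal) τ :=
    integrable_toReal_of_lintegral_ne_top hcym.aemeasurable
      (by rw [hcy1]; exact ENNReal.one_ne_top)
  have hEcx : ∫ a, (∫⁻ t, ∫⁻ s, (m s t a : ℝ≥0∞) ∂x ∂lam).toReal ∂τ = 1 := by
    rw [integral_toReal hcxm.aemeasurable hcxfin, hcx1, ENNReal.toReal_one]
  have hEcy : ∫ a, (∫⁻ t, ∫⁻ s, (m s t a : ℝ≥0∞) ∂y ∂lam).toReal ∂τ = 1 := by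
    rw [integral_toReal hcym.aemeasurable hcyfin, hcy1, ENNReal.toReal_one]
  have hGint : ∫ a, ((u (hmap lam m x a) * (∫⁻ t, ∫⁻ s, (m s t a : ℝ≥0∞) ∂x ∂lam).toReal
        - u (hmap lam m y a) * (∫⁻ t, ∫⁻ s, (m s t a : ℝ≥0∞) ∂y ∂lam).toReal)
        - c * ((∫⁻ t, ∫⁻ s, (m s t a : ℝ≥0∞) ∂x ∂lam).toReal
          - (∫⁻ t, ∫⁻ s, (m s t a : ℝ≥0∞) ∂y ∂lam).toReal)) ∂τ
      = (∫ a, u (hmap lam m x a) * (∫⁻ t, ∫⁻ s, (m s t a : ℝ≥0∞) ∂x ∂lam).toReal ∂τ)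
        - ∫ a, u (hmap lam m y a) * (∫⁻ t, ∫⁻ s, (m s t a : ℝ≥0∞) ∂y ∂lam).toReal ∂τ := by
    have hI1 : Integrable (fun a =>
        u (hmap lam m x a) * (∫⁻ t, ∫⁻ s, (m s t a : ℝ≥0∞) ∂x ∂lam).toReal
        - u (hmap lam m y a) * (∫⁻ t, ∫⁻ s, (m s t a : ℝ≥0∞) ∂y ∂lam).toReal) τ := hIx.sub hIy
    have hI2 : Integrable (fun a => (∫⁻ t, ∫⁻ s, (m s t a : ℝ≥0∞) ∂x ∂lam).toReal
        - (∫⁻ t, ∫⁻ s, (m s t a : ℝ≥0∞) ∂y ∂lam).toReal) τ := hIcx.sub hIcy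
    have hI3 : Integrable (fun a => c * ((∫⁻ t, ∫⁻ s, (m s t a : ℝ≥0∞) ∂x ∂lam).toReal
        - (∫⁻ t, ∫⁻ s, (m s t a : ℝ≥0∞) ∂y ∂lam).toReal)) τ := hI2.const_mul c
    rw [integral_sub hI1 hI3, integral_sub hIx hIy,
      integral_const_mul, integral_sub hIcx hIcy, hEcx, hEcy]
    ring
  rw [hfx, hfy, ← hGint, ← Real.norm_eq_abs]
  calc ‖∫ a, ((u (hmap lam m x a) * (∫⁻ t, ∫⁻ s, (m s t a : ℝ≥0∞) ∂x ∂lam).toReal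
        - u (hmap lam m y a) * (∫⁻ t, ∫⁻ s, (m s t a : ℝ≥0∞) ∂y ∂lam).toReal)
        - c * ((∫⁻ t, ∫⁻ s, (m s t a : ℝ≥0∞) ∂x ∂lam).toReal
          - (∫⁻ t, ∫⁻ s, (m s t a : ℝ≥0∞) ∂y ∂lam).toReal)) ∂τ‖
      ≤ (∫⁻ a, ENNReal.ofReal
        ‖(u (hmap lam m x a) * (∫⁻ t, ∫⁻ s, (m s t a : ℝ≥0∞) ∂x ∂lam).toReal
          - u (hmap lam m y a) * (∫⁻ t, ∫⁻ s, (m s t a : ℝ≥0∞) ∂y ∂lam).toReal)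
          - c * ((∫⁻ t, ∫⁻ s, (m s t a : ℝ≥0∞) ∂x ∂lam).toReal
            - (∫⁻ t, ∫⁻ s, (m s t a : ℝ≥0∞) ∂y ∂lam).toReal)‖ ∂τ).toReal :=
        norm_integral_le_lintegral_norm _
    _ ≤ (ENNReal.ofReal (3 * γu) * ∫⁻ s, ((x.rnDeriv lam s - y.rnDeriv lam s)
        + (y.rnDeriv lam s - x.rnDeriv lam s)) ∂lam).toReal := by
        apply ENNReal.toReal_mono (ENNReal.mul_ne_top ENNReal.ofReal_ne_top hDne)
        calc _ ≤ ∫⁻ a, ENNReal.ofReal (3 * γu)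
              * ∫⁻ t, ((∫⁻ s, (m s t a : ℝ≥0∞) ∂x - ∫⁻ s, (m s t a : ℝ≥0∞) ∂y)
                + (∫⁻ s, (m s t a : ℝ≥0∞) ∂y - ∫⁻ s, (m s t a : ℝ≥0∞) ∂x)) ∂lam ∂τ :=
              lintegral_mono_ae hkey
          _ = ENNReal.ofReal (3 * γu)
              * ∫⁻ a, ∫⁻ t, ((∫⁻ s, (m s t a : ℝ≥0∞) ∂x - ∫⁻ s, (m s t a : ℝ≥0∞) ∂y)
                + (∫⁻ s, (m s t a : ℝ≥0∞) ∂y - ∫⁻ s, (m s t a : ℝ≥0∞) ∂x)) ∂lam ∂τ :=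
              lintegral_const_mul' _ _ ENNReal.ofReal_ne_top
          _ ≤ _ := mul_le_mul_right hφint _
    _ = 3 * γu * tvDist x y := by
        rw [ENNReal.toReal_mul, ENNReal.toReal_ofReal (by positivity), htvxy]
end

section
/- Define m^{(1,2)} : S × S × A₁ × A₂ → [0, ∞) by m^{(1,2)}(s,t,a₁,a₂) = ∫_S m₁(s,s',a₁) m₂(s',t,a₂) λ(ds'), and for x ∈ K let xM^{(1,2)}_{(a₁,a₂)} be the measure F ↦ ∫_S ∫_F m^{(1,2)}(s,t,a₁,a₂) λ(dt) x(ds), with the corresponding normalized map h^{(1,2)}(x,(a₁,a₂)) defined with fallback x when the total mass vanishes. Define the transition operators T₁u(x) = ∫_{A₁} u(h₁(x,a₁)) ‖xM¹_{a₁}‖ τ₁(da₁), T₂u(x) = ∫_{A₂} u(h₂(x,a₂)) ‖xM²_{a₂}‖ τ₂(da₂), and T^{(1,2)}u(x) = ∫_{A₁×A₂} u(h^{(1,2)}(x,(a₁,a₂))) ‖xM^{(1,2)}_{(a₁,a₂)}‖ (τ₁⊗τ₂)(d(a₁,a₂)). Then for every u : K → ℝ that is bounded and measurable with respect to the σ-algebra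 generated by the evaluation maps z ↦ z(F), F ∈ 𝓕, and for every x ∈ K, T₁(T₂u)(x) = T^{(1,2)}u(x). -/
open MeasureTheory
open scoped NNReal ENNReal

/-- The measure `xM^{(1,2)}_{(a₁,a₂)}` of the composed HMM, with density kernel
`m^{(1,2)}(s,t,a₁,a₂) = ∫_S m₁(s,s',a₁) m₂(s',t,a₂) λ(ds')`. -/
noncomputable def xM12 {S A₁ A₂ : Type*}
    [MeasurableSpace S] [MeasurableSpace A₁] [MeasurableSpace A₂]
    (lam : Measure S) (m₁ : S → S → A₁ → ℝ≥0) (m₂ : S → S → A₂ → ℝ≥0)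
    (x : Measure S) (a : A₁ × A₂) : Measure S :=
  x.bind fun s =>
    lam.withDensity fun t => ∫⁻ s', (m₁ s s' a.1 : ℝ≥0∞) * (m₂ s' t a.2 : ℝ≥0∞) ∂lam

/-- The normalized map `h^{(1,2)}` of the composed HMM, with fallback `x` when the total
mass vanishes. -/
noncomputable def h12 {S A₁ A₂ : Type*}
    [MeasurableSpace S] [MeasurableSpace A₁] [MeasurableSpace A₂]
    (lam : Measure S) (m₁ : S → S → A₁ → ℝ≥0) (m₂ : S → S → A₂ → ℝ≥0)
    (x : Measure S) (a : A₁ × A₂) : Measure S :=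
  if 0 < xM12 lam m₁ m₂ x a Set.univ then
    (xM12 lam m₁ m₂ x a Set.univ)⁻¹ • xM12 lam m₁ m₂ x a
  else x

section Helpers

variable {S : Type*} [MeasurableSpace S]

lemma meas_wdker (lam : Measure S) [SigmaFinite lam] {M : S → S → ℝ≥0∞}
    (hM : Measurable fun p : S × S => M p.1 p.2) :
    Measurable fun s => lam.withDensity (M s) := by
  apply Measure.measurable_of_measurable_coe
  intro F hF
  simp_rw [withDensity_apply _ hF]
  exact hM.lintegral_prod_right'

lemma bindwd_apply (lam : Measure S) [SigmaFinite lam] (x : Measure S) {M : S → S → ℝ≥0∞}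
    (hM : Measurable fun p : S × S => M p.1 p.2) {F : Set S} (hF : MeasurableSet F) :
    (x.bind fun s => lam.withDensity (M s)) F = ∫⁻ s, ∫⁻ t in F, M s t ∂lam ∂x := by
  rw [Measure.bind_apply hF (meas_wdker lam hM).aemeasurable]
  simp_rw [withDensity_apply _ hF]

lemma bind_smul_measure (x : Measure S) {T : Type*} [MeasurableSpace T]
    {f : S → Measure T} (hf : Measurable f) (c : ℝ≥0∞) :
    (c • x).bind f = c • x.bind f := by
  ext F hF
  rw [Measure.bind_apply hF hf.aemeasurable, Measure.smul_apply, Measure.bind_apply hF hf.aemeasurable,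
    lintegral_smul_measure, smul_eq_mul]

/-- Composition of two withDensity-kernel binds. -/
lemma bind_bind_wd (lam : Measure S) [SigmaFinite lam] (x : Measure S)
    {M₁ M₂ : S → S → ℝ≥0∞}
    (hM₁ : Measurable fun p : S × S => M₁ p.1 p.2)
    (hM₂ : Measurable fun p : S × S => M₂ p.1 p.2) :
    (x.bind fun s => lam.withDensity (M₁ s)).bind (fun t => lam.withDensity (M₂ t)) =
      x.bind (fun s => lam.withDensity fun t => ∫⁻ s', M₁ s s' * M₂ s' t ∂lam) := by
  rw [Measure.bind_bind (meas_wdker lam hM₁).aemeasurable (meas_wdker lam hM₂).aemeasurable]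
  congr 1
  funext s
  ext F hF
  have h1 : Measurable (M₁ s) := hM₁.comp measurable_prodMk_left
  have h2 : Measurable fun t => (lam.withDensity (M₂ t)) F :=
    (Measure.measurable_coe hF).comp (meas_wdker lam hM₂)
  rw [Measure.bind_apply hF (meas_wdker lam hM₂).aemeasurable, withDensity_apply _ hF,
    lintegral_withDensity_eq_lintegral_mul _ h1 h2]
  simp only [Pi.mul_apply]
  simp_rw [withDensity_apply _ hF]
  have : ∀ s' : S, M₁ s s' * ∫⁻ t in F, M₂ s' t ∂lam = ∫⁻ t in F, M₁ s s' * M₂ s' t ∂lam := by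
    intro s'
    exact (lintegral_const_mul _ ((hM₂.comp measurable_prodMk_left : Measurable (M₂ s')))).symm
  simp_rw [this]
  exact lintegral_lintegral_swap
    ((hM₁.comp (measurable_const.prodMk measurable_fst)).mul
      (hM₂.comp (measurable_fst.prodMk measurable_snd))).aemeasurable

end Helpers

section XMaLemmas

variable {S A : Type*} [MeasurableSpace S] [MeasurableSpace A]
  (lam : Measure S) [SigmaFinite lam] {m : S → S → A → ℝ≥0} (x : Measure S)

lemma slice_meas (hm : Measurable fun p : S × S × A => m p.1 p.2.1 p.2.2) (a : A) :
    Measurable fun p : S × S => (m p.1 p.2 a : ℝ≥0∞) := by fun_prop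

lemma xMa_apply (hm : Measurable fun p : S × S × A => m p.1 p.2.1 p.2.2)
    {F : Set S} (hF : MeasurableSet F) (a : A) :
    xMa lam m x a F = ∫⁻ s, ∫⁻ t in F, (m s t a : ℝ≥0∞) ∂lam ∂x :=
  bindwd_apply lam x (slice_meas hm a) hF

lemma xMa_smul (hm : Measurable fun p : S × S × A => m p.1 p.2.1 p.2.2)
    (c : ℝ≥0∞) (a : A) :
    xMa lam m (c • x) a = c • xMa lam m x a :=
  bind_smul_measure x (meas_wdker lam (slice_meas hm a)) c

lemma meas_xMa_eval [SFinite x] (hm : Measurable fun p : S × S × A => m p.1 p.2.1 p.2.2)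
    {F : Set S} (hF : MeasurableSet F) :
    Measurable fun a => xMa lam m x a F := by
  simp_rw [fun a => xMa_apply lam x hm hF a]
  exact Measurable.lintegral_prod_right'
    (f := fun p : A × S => ∫⁻ t in F, (m p.2 t p.1 : ℝ≥0∞) ∂lam)
    (Measurable.lintegral_prod_right'
      (f := fun p : (A × S) × S => (m p.1.2 p.2 p.1.1 : ℝ≥0∞)) (by fun_prop))

lemma meas_hmap [SFinite x] (hm : Measurable fun p : S × S × A => m p.1 p.2.1 p.2.2) :
    Measurable fun a => hmap lam m x a := by
  have he : Measurable fun a => xMa lam m x a Set.univ :=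
    meas_xMa_eval lam x hm MeasurableSet.univ
  unfold hmap
  refine Measurable.ite ?_ ?_ measurable_const
  · exact measurableSet_lt measurable_const he
  · apply Measure.measurable_of_measurable_coe
    intro F hF
    simp_rw [Measure.smul_apply, smul_eq_mul]
    exact (he.inv).mul (meas_xMa_eval lam x hm hF)

end XMaLemmas

section XM12Lemmas

variable {S A₁ A₂ : Type*} [MeasurableSpace S] [MeasurableSpace A₁] [MeasurableSpace A₂]
  (lam : Measure S) [SigmaFinite lam] {m₁ : S → S → A₁ → ℝ≥0} {m₂ : S → S → A₂ → ℝ≥0}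
  (x : Measure S)

lemma xM12_slice (hm₁ : Measurable fun p : S × S × A₁ => m₁ p.1 p.2.1 p.2.2)
    (hm₂ : Measurable fun p : S × S × A₂ => m₂ p.1 p.2.1 p.2.2) (a : A₁ × A₂) :
    Measurable fun p : S × S =>
      ∫⁻ s', (m₁ p.1 s' a.1 : ℝ≥0∞) * (m₂ s' p.2 a.2 : ℝ≥0∞) ∂lam :=
  Measurable.lintegral_prod_right'
    (f := fun q : (S × S) × S => (m₁ q.1.1 q.2 a.1 : ℝ≥0∞) * (m₂ q.2 q.1.2 a.2 : ℝ≥0∞))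
    (by fun_prop)

lemma xM12_apply (hm₁ : Measurable fun p : S × S × A₁ => m₁ p.1 p.2.1 p.2.2)
    (hm₂ : Measurable fun p : S × S × A₂ => m₂ p.1 p.2.1 p.2.2)
    {F : Set S} (hF : MeasurableSet F) (a : A₁ × A₂) :
    xM12 lam m₁ m₂ x a F =
      ∫⁻ s, ∫⁻ t in F, (∫⁻ s', (m₁ s s' a.1 : ℝ≥0∞) * (m₂ s' t a.2 : ℝ≥0∞) ∂lam) ∂lam ∂x :=
  bindwd_apply lam x (xM12_slice lam hm₁ hm₂ a) hF

lemma xM12_comp (hm₁ : Measurable fun p : S × S × A₁ => m₁ p.1 p.2.1 p.2.2)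
    (hm₂ : Measurable fun p : S × S × A₂ => m₂ p.1 p.2.1 p.2.2) (a₁ : A₁) (a₂ : A₂) :
    xM12 lam m₁ m₂ x (a₁, a₂) = xMa lam m₂ (xMa lam m₁ x a₁) a₂ :=
  (bind_bind_wd lam x (slice_meas hm₁ a₁) (slice_meas hm₂ a₂)).symm

lemma meas_xM12_eval [SFinite x] (hm₁ : Measurable fun p : S × S × A₁ => m₁ p.1 p.2.1 p.2.2)
    (hm₂ : Measurable fun p : S × S × A₂ => m₂ p.1 p.2.1 p.2.2)
    {F : Set S} (hF : MeasurableSet F) :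
    Measurable fun a : A₁ × A₂ => xM12 lam m₁ m₂ x a F := by
  simp_rw [fun a => xM12_apply lam x hm₁ hm₂ hF a]
  exact Measurable.lintegral_prod_right'
    (f := fun p : (A₁ × A₂) × S => ∫⁻ t in F,
      (∫⁻ s', (m₁ p.2 s' p.1.1 : ℝ≥0∞) * (m₂ s' t p.1.2 : ℝ≥0∞) ∂lam) ∂lam)
    (Measurable.lintegral_prod_right'
      (f := fun p : ((A₁ × A₂) × S) × S =>
        ∫⁻ s', (m₁ p.1.2 s' p.1.1.1 : ℝ≥0∞) * (m₂ s' p.2 p.1.1.2 : ℝ≥0∞) ∂lam)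
      (Measurable.lintegral_prod_right'
        (f := fun p : (((A₁ × A₂) × S) × S) × S =>
          (m₁ p.1.1.2 p.2 p.1.1.1.1 : ℝ≥0∞) * (m₂ p.2 p.1.2 p.1.1.1.2 : ℝ≥0∞))
        (by fun_prop)))

lemma meas_h12 [SFinite x] (hm₁ : Measurable fun p : S × S × A₁ => m₁ p.1 p.2.1 p.2.2)
    (hm₂ : Measurable fun p : S × S × A₂ => m₂ p.1 p.2.1 p.2.2) :
    Measurable fun a : A₁ × A₂ => h12 lam m₁ m₂ x a := by
  have he : Measurable fun a : A₁ × A₂ => xM12 lam m₁ m₂ x a Set.univ :=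
    meas_xM12_eval lam x hm₁ hm₂ MeasurableSet.univ
  unfold h12
  refine Measurable.ite ?_ ?_ measurable_const
  · exact measurableSet_lt measurable_const he
  · apply Measure.measurable_of_measurable_coe
    intro F hF
    simp_rw [Measure.smul_apply, smul_eq_mul]
    exact (he.inv).mul (meas_xM12_eval lam x hm₁ hm₂ hF)

end XM12Lemmas

section Mass

variable {S A₁ A₂ A : Type*} [MeasurableSpace S] [MeasurableSpace A]
  [MeasurableSpace A₁] [MeasurableSpace A₂]
  (lam : Measure S) [SigmaFinite lam]

lemma mass_xMa_total (τ : Measure A) [SigmaFinite τ] {m : S → S → A → ℝ≥0}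
    (x : Measure S) [IsProbabilityMeasure x]
    (hm : Measurable fun p : S × S × A => m p.1 p.2.1 p.2.2)
    (hnorm : ∀ s, ∫⁻ t, ∫⁻ a, (m s t a : ℝ≥0∞) ∂τ ∂lam = 1) :
    ∫⁻ a, xMa lam m x a Set.univ ∂τ = 1 := by
  calc ∫⁻ a, xMa lam m x a Set.univ ∂τ
      = ∫⁻ a, ∫⁻ s, ∫⁻ t, (m s t a : ℝ≥0∞) ∂lam ∂x ∂τ := by
        refine lintegral_congr fun a => ?_
        rw [xMa_apply lam x hm MeasurableSet.univ a, Measure.restrict_univ]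
    _ = ∫⁻ s, ∫⁻ a, ∫⁻ t, (m s t a : ℝ≥0∞) ∂lam ∂τ ∂x :=
        lintegral_lintegral_swap (Measurable.lintegral_prod_right'
          (f := fun p : (A × S) × S => (m p.1.2 p.2 p.1.1 : ℝ≥0∞)) (by fun_prop)).aemeasurable
    _ = ∫⁻ s, ∫⁻ t, ∫⁻ a, (m s t a : ℝ≥0∞) ∂τ ∂lam ∂x := by
        refine lintegral_congr fun s => ?_
        exact lintegral_lintegral_swap
          ((by fun_prop : Measurable fun p : A × S => (m s p.2 p.1 : ℝ≥0∞))).aemeasurable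
    _ = ∫⁻ s, 1 ∂x := lintegral_congr fun s => hnorm s
    _ = 1 := by simp

lemma mass_xM12_total (τ₁ : Measure A₁) [SigmaFinite τ₁] (τ₂ : Measure A₂) [SigmaFinite τ₂]
    {m₁ : S → S → A₁ → ℝ≥0} {m₂ : S → S → A₂ → ℝ≥0}
    (x : Measure S) [IsProbabilityMeasure x]
    (hm₁ : Measurable fun p : S × S × A₁ => m₁ p.1 p.2.1 p.2.2)
    (hm₂ : Measurable fun p : S × S × A₂ => m₂ p.1 p.2.1 p.2.2)
    (hnorm₁ : ∀ s, ∫⁻ t, ∫⁻ a, (m₁ s t a : ℝ≥0∞) ∂τ₁ ∂lam = 1)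
    (hnorm₂ : ∀ s, ∫⁻ t, ∫⁻ a, (m₂ s t a : ℝ≥0∞) ∂τ₂ ∂lam = 1) :
    ∫⁻ a, xM12 lam m₁ m₂ x a Set.univ ∂(τ₁.prod τ₂) = 1 := by
  have inner : ∀ (a₁ : A₁) (s : S),
      ∫⁻ a₂, ∫⁻ t, ∫⁻ s', (m₁ s s' a₁ : ℝ≥0∞) * (m₂ s' t a₂ : ℝ≥0∞) ∂lam ∂lam ∂τ₂ =
        ∫⁻ s', (m₁ s s' a₁ : ℝ≥0∞) ∂lam := by
    intro a₁ s
    calc ∫⁻ a₂, ∫⁻ t, ∫⁻ s', (m₁ s s' a₁ : ℝ≥0∞) * (m₂ s' t a₂ : ℝ≥0∞) ∂lam ∂lam ∂τ₂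
        = ∫⁻ a₂, ∫⁻ s', ∫⁻ t, (m₁ s s' a₁ : ℝ≥0∞) * (m₂ s' t a₂ : ℝ≥0∞) ∂lam ∂lam ∂τ₂ := by
          refine lintegral_congr fun a₂ => ?_
          exact lintegral_lintegral_swap
            ((by fun_prop : Measurable fun p : S × S =>
              (m₁ s p.2 a₁ : ℝ≥0∞) * (m₂ p.2 p.1 a₂ : ℝ≥0∞))).aemeasurable
      _ = ∫⁻ s', ∫⁻ a₂, ∫⁻ t, (m₁ s s' a₁ : ℝ≥0∞) * (m₂ s' t a₂ : ℝ≥0∞) ∂lam ∂τ₂ ∂lam :=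
          lintegral_lintegral_swap (Measurable.lintegral_prod_right'
            (f := fun q : (A₂ × S) × S =>
              (m₁ s q.1.2 a₁ : ℝ≥0∞) * (m₂ q.1.2 q.2 q.1.1 : ℝ≥0∞)) (by fun_prop)).aemeasurable
      _ = ∫⁻ s', (m₁ s s' a₁ : ℝ≥0∞) * ∫⁻ a₂, ∫⁻ t, (m₂ s' t a₂ : ℝ≥0∞) ∂lam ∂τ₂ ∂lam := by
          refine lintegral_congr fun s' => ?_
          have e1 : ∀ a₂ : A₂, ∫⁻ t, (m₁ s s' a₁ : ℝ≥0∞) * (m₂ s' t a₂ : ℝ≥0∞) ∂lam =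
              (m₁ s s' a₁ : ℝ≥0∞) * ∫⁻ t, (m₂ s' t a₂ : ℝ≥0∞) ∂lam := fun a₂ =>
            lintegral_const_mul _ (by fun_prop)
          simp_rw [e1]
          exact lintegral_const_mul _ (Measurable.lintegral_prod_right'
            (f := fun q : A₂ × S => (m₂ s' q.2 q.1 : ℝ≥0∞)) (by fun_prop))
      _ = ∫⁻ s', (m₁ s s' a₁ : ℝ≥0∞) * 1 ∂lam := by
          refine lintegral_congr fun s' => ?_
          congr 1
          rw [lintegral_lintegral_swap
            ((by fun_prop : Measurable fun p : A₂ × S => (m₂ s' p.2 p.1 : ℝ≥0∞))).aemeasurable]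
          exact hnorm₂ s'
      _ = ∫⁻ s', (m₁ s s' a₁ : ℝ≥0∞) ∂lam := by simp
  calc ∫⁻ a, xM12 lam m₁ m₂ x a Set.univ ∂(τ₁.prod τ₂)
      = ∫⁻ a₁, ∫⁻ a₂, xM12 lam m₁ m₂ x (a₁, a₂) Set.univ ∂τ₂ ∂τ₁ :=
        lintegral_prod _ (meas_xM12_eval lam x hm₁ hm₂ MeasurableSet.univ).aemeasurable
    _ = ∫⁻ a₁, ∫⁻ a₂, ∫⁻ s, ∫⁻ t, ∫⁻ s',
          (m₁ s s' a₁ : ℝ≥0∞) * (m₂ s' t a₂ : ℝ≥0∞) ∂lam ∂lam ∂x ∂τ₂ ∂τ₁ := by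
        refine lintegral_congr fun a₁ => lintegral_congr fun a₂ => ?_
        rw [xM12_apply lam x hm₁ hm₂ MeasurableSet.univ (a₁, a₂), Measure.restrict_univ]
    _ = ∫⁻ a₁, ∫⁻ s, ∫⁻ a₂, ∫⁻ t, ∫⁻ s',
          (m₁ s s' a₁ : ℝ≥0∞) * (m₂ s' t a₂ : ℝ≥0∞) ∂lam ∂lam ∂τ₂ ∂x ∂τ₁ := by
        refine lintegral_congr fun a₁ => ?_
        exact lintegral_lintegral_swap (Measurable.lintegral_prod_right'
          (f := fun q : (A₂ × S) × S => ∫⁻ s',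
            (m₁ q.1.2 s' a₁ : ℝ≥0∞) * (m₂ s' q.2 q.1.1 : ℝ≥0∞) ∂lam)
          (Measurable.lintegral_prod_right'
            (f := fun q : ((A₂ × S) × S) × S =>
              (m₁ q.1.1.2 q.2 a₁ : ℝ≥0∞) * (m₂ q.2 q.1.2 q.1.1.1 : ℝ≥0∞))
            (by fun_prop))).aemeasurable
    _ = ∫⁻ a₁, ∫⁻ s, ∫⁻ s', (m₁ s s' a₁ : ℝ≥0∞) ∂lam ∂x ∂τ₁ := by
        refine lintegral_congr fun a₁ => lintegral_congr fun s => inner a₁ s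
    _ = ∫⁻ s, ∫⁻ a₁, ∫⁻ s', (m₁ s s' a₁ : ℝ≥0∞) ∂lam ∂τ₁ ∂x :=
        lintegral_lintegral_swap (Measurable.lintegral_prod_right'
          (f := fun q : (A₁ × S) × S => (m₁ q.1.2 q.2 q.1.1 : ℝ≥0∞)) (by fun_prop)).aemeasurable
    _ = ∫⁻ s, 1 ∂x := by
        refine lintegral_congr fun s => ?_
        rw [lintegral_lintegral_swap
          ((by fun_prop : Measurable fun p : A₁ × S => (m₁ s p.2 p.1 : ℝ≥0∞))).aemeasurable]
        exact hnorm₁ s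
    _ = 1 := by simp

end Mass

/-- `T₁(T₂u)(x) = T^{(1,2)}u(x)` for every bounded, measurable
`u : Measure S → ℝ` (with respect to the σ-algebra generated by the evaluation maps)
and every `x ∈ K`, where
`T₁u(x) = ∫_{A₁} u(h₁(x,a₁)) ‖xM¹_{a₁}‖ τ₁(da₁)`,
`T₂u(x) = ∫_{A₂} u(h₂(x,a₂)) ‖xM²_{a₂}‖ τ₂(da₂)`, and
`T^{(1,2)}u(x) = ∫_{A₁×A₂} u(h^{(1,2)}(x,(a₁,a₂))) ‖xM^{(1,2)}_{(a₁,a₂)}‖ (τ₁⊗τ₂)(da₁,da₂)`. -/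
theorem stmt_16 {S A₁ A₂ : Type*}
    [MetricSpace S] [CompleteSpace S] [TopologicalSpace.SeparableSpace S]
    [MeasurableSpace S] [BorelSpace S]
    [MetricSpace A₁] [CompleteSpace A₁] [TopologicalSpace.SeparableSpace A₁]
    [MeasurableSpace A₁] [BorelSpace A₁]
    [MetricSpace A₂] [CompleteSpace A₂] [TopologicalSpace.SeparableSpace A₂]
    [MeasurableSpace A₂] [BorelSpace A₂]
    (lam : Measure S) [SigmaFinite lam]
    (τ₁ : Measure A₁) [SigmaFinite τ₁] (τ₂ : Measure A₂) [SigmaFinite τ₂]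
    (m₁ : S → S → A₁ → ℝ≥0) (m₂ : S → S → A₂ → ℝ≥0)
    (hm₁ : Measurable fun p : S × S × A₁ => m₁ p.1 p.2.1 p.2.2)
    (hm₂ : Measurable fun p : S × S × A₂ => m₂ p.1 p.2.1 p.2.2)
    (hnorm₁ : ∀ s : S, ∫⁻ t, ∫⁻ a, (m₁ s t a : ℝ≥0∞) ∂τ₁ ∂lam = 1)
    (hnorm₂ : ∀ s : S, ∫⁻ t, ∫⁻ a, (m₂ s t a : ℝ≥0∞) ∂τ₂ ∂lam = 1)
    (u : Measure S → ℝ) (hu : Measurable u) (hub : ∃ C : ℝ, ∀ z, |u z| ≤ C)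
    (x : Measure S) (hx : IsProbabilityMeasure x) (hxl : x ≪ lam) :
    ∫ a₁, (∫ a₂, u (hmap lam m₂ (hmap lam m₁ x a₁) a₂) *
            (xMa lam m₂ (hmap lam m₁ x a₁) a₂ Set.univ).toReal ∂τ₂) *
          (xMa lam m₁ x a₁ Set.univ).toReal ∂τ₁ =
      ∫ a, u (h12 lam m₁ m₂ x a) * (xM12 lam m₁ m₂ x a Set.univ).toReal ∂(τ₁.prod τ₂) := by
  
  obtain ⟨C, hC⟩ := hub
  haveI : IsProbabilityMeasure x := hx
  set c : A₁ → ℝ≥0∞ := fun a₁ => xMa lam m₁ x a₁ Set.univ with hcdef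
  set g : A₁ × A₂ → ℝ≥0∞ := fun a => xM12 lam m₁ m₂ x a Set.univ with hgdef
  have hgmeas : Measurable g := meas_xM12_eval lam x hm₁ hm₂ MeasurableSet.univ
  have hgtot : ∫⁻ a, g a ∂(τ₁.prod τ₂) = 1 :=
    mass_xM12_total lam τ₁ τ₂ x hm₁ hm₂ hnorm₁ hnorm₂
  have hcmeas : Measurable c := meas_xMa_eval lam x hm₁ MeasurableSet.univ
  have hctot : ∫⁻ a₁, c a₁ ∂τ₁ = 1 := mass_xMa_total lam τ₁ x hm₁ hnorm₁
  have hcfin : ∀ᵐ a₁ ∂τ₁, c a₁ < ∞ :=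
    ae_lt_top hcmeas (by rw [hctot]; exact ENNReal.one_ne_top)
  -- Integrability of the product-side integrand
  have hR : Integrable
      (fun a : A₁ × A₂ => u (h12 lam m₁ m₂ x a) * (xM12 lam m₁ m₂ x a Set.univ).toReal)
      (τ₁.prod τ₂) := by
    constructor
    · exact ((hu.comp (meas_h12 lam x hm₁ hm₂)).mul hgmeas.ennreal_toReal).aestronglyMeasurable
    · rw [HasFiniteIntegral]
      calc ∫⁻ a, ↑‖u (h12 lam m₁ m₂ x a) * (xM12 lam m₁ m₂ x a Set.univ).toReal‖₊ ∂(τ₁.prod τ₂)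
          ≤ ∫⁻ a, ENNReal.ofReal C * g a ∂(τ₁.prod τ₂) := by
            refine lintegral_mono fun a => ?_
            rw [nnnorm_mul, ENNReal.coe_mul]
            refine mul_le_mul' ?_ ?_
            · rw [← enorm_eq_nnnorm, Real.enorm_eq_ofReal_abs]
              exact ENNReal.ofReal_le_ofReal (hC _)
            · rw [← enorm_eq_nnnorm, Real.enorm_eq_ofReal ENNReal.toReal_nonneg]
              exact ENNReal.ofReal_toReal_le
        _ = ENNReal.ofReal C * 1 := by rw [lintegral_const_mul _ hgmeas, hgtot]
        _ < ∞ := by simp [ENNReal.ofReal_lt_top]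
  rw [integral_prod _ hR]
  refine integral_congr_ae ?_
  filter_upwards [hcfin] with a₁ hfin
  rw [← integral_mul_const]
  refine integral_congr_ae (Filter.Eventually.of_forall fun a₂ => ?_)
  beta_reduce
  by_cases hc0 : c a₁ = 0
  · -- degenerate case: first-step mass vanishes
    have hz : xMa lam m₁ x a₁ = 0 := Measure.measure_univ_eq_zero.mp hc0
    have hg0 : xM12 lam m₁ m₂ x (a₁, a₂) = 0 := by
      rw [xM12_comp lam x hm₁ hm₂ a₁ a₂, hz]
      exact Measure.bind_zero_left _
    have : (c a₁).toReal = 0 := by rw [hc0]; simp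
    rw [this, hg0]
    simp
  · have hcpos : 0 < c a₁ := pos_iff_ne_zero.mpr hc0
    have hfin' : c a₁ ≠ ∞ := hfin.ne
    have hmeq : hmap lam m₁ x a₁ = (c a₁)⁻¹ • xMa lam m₁ x a₁ := if_pos hcpos
    have hxM : xMa lam m₂ (hmap lam m₁ x a₁) a₂ = (c a₁)⁻¹ • xMa lam m₂ (xMa lam m₁ x a₁) a₂ := by
      rw [hmeq, xMa_smul lam (xMa lam m₁ x a₁) hm₂]
    set w : ℝ≥0∞ := xMa lam m₂ (xMa lam m₁ x a₁) a₂ Set.univ with hwdef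
    have hg' : xM12 lam m₁ m₂ x (a₁, a₂) = xMa lam m₂ (xMa lam m₁ x a₁) a₂ :=
      xM12_comp lam x hm₁ hm₂ a₁ a₂
    have hxMuniv : xMa lam m₂ (hmap lam m₁ x a₁) a₂ Set.univ = (c a₁)⁻¹ * w := by
      rw [hxM, Measure.smul_apply, smul_eq_mul]
    have hinv0 : (c a₁)⁻¹ ≠ 0 := ENNReal.inv_ne_zero.mpr hfin'
    have hinvtop : (c a₁)⁻¹ ≠ ∞ := ENNReal.inv_ne_top.mpr hc0
    by_cases hw0 : w = 0
    · rw [hxMuniv, hg', ← hwdef, hw0]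
      simp
    · by_cases hwtop : w = ∞
      · rw [hxMuniv, hg', ← hwdef, hwtop, ENNReal.mul_top hinv0]
        simp
      · have hmass : ((c a₁)⁻¹ * w).toReal * (c a₁).toReal = w.toReal := by
          rw [← ENNReal.toReal_mul]
          congr 1
          rw [mul_comm, ← mul_assoc, ENNReal.mul_inv_cancel hc0 hfin', one_mul]
        have heq1 : hmap lam m₂ (hmap lam m₁ x a₁) a₂ = h12 lam m₁ m₂ x (a₁, a₂) := by
          have hcond : 0 < xMa lam m₂ (hmap lam m₁ x a₁) a₂ Set.univ := by
            rw [hxMuniv]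
            exact ENNReal.mul_pos hinv0 hw0
          have hcond' : 0 < xM12 lam m₁ m₂ x (a₁, a₂) Set.univ := by
            rw [hg', ← hwdef]
            exact pos_iff_ne_zero.mpr hw0
          rw [hmap, if_pos hcond, h12, if_pos hcond', hxMuniv, hxM, hg', ← hwdef,
            smul_smul, ENNReal.mul_inv (Or.inl hinv0) (Or.inl hinvtop), inv_inv,
            mul_right_comm, ENNReal.mul_inv_cancel hc0 hfin', one_mul]
        rw [heq1, hxMuniv, hg', ← hwdef, mul_assoc, hmass]
end

section
/- Suppose that for every ε > 0 there exists η > 0 such that whenever ϱ(a,b) < η one has λ(S₊(a) Δ S₊(b)) < ε and |q(t,a) − q(t,b)| < ε for all t ∈ S₊(a) ∩ S₊(b). Then the map (x, a) ↦ xM_a, where xM_a(F) = ∫_S ∫_F p(s,t) q(t,a) λ(dt) x(ds), is jointly continuous from (finite nonnegative measures on (S,𝓕) absolutely continuous with respect to λ, with the total variation distance) × (A, ϱ) into the finite measures on (S,𝓕) with the total variation distance; explicitly, for every such measure x, every a ∈ A and every ε > 0 there is δ > 0 such that δ_TV(xM_a, yM_b) < ε whenever y is a finite nonnegative measure absolutely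 continuous with respect to λ with δ_TV(x, y) < δ and b ∈ A with ϱ(a, b) < δ. -/
open MeasureTheory
open scoped NNReal ENNReal symmDiff

/-- The measure `xM_a`, `xM_a(F) = ∫_S ∫_F p(s,t) q(t,a) λ(dt) x(ds)`. -/
noncomputable def xMpq {S A : Type*} [MeasurableSpace S]
    (lam : Measure S) (p : S → S → ℝ≥0) (q : S → A → ℝ≥0)
    (x : Measure S) (a : A) : Measure S :=
  x.bind fun s => lam.withDensity fun t => (p s t : ℝ≥0∞) * (q t a : ℝ≥0∞)

section Aux

variable {S : Type*} [MeasurableSpace S]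

/-- Key comparison lemma via Hahn decomposition: if `x F ≤ y F + d` for all measurable `F`,
then `∫ f dx ≤ ∫ f dy + C d` for `f ≤ C`. -/
lemma aux_lint_le {x y : Measure S} [IsFiniteMeasure x] [IsFiniteMeasure y] (d : ℝ≥0∞)
    (h : ∀ F : Set S, MeasurableSet F → x F ≤ y F + d)
    (f : S → ℝ≥0∞) {C : ℝ≥0∞} (hC : ∀ s, f s ≤ C) :
    ∫⁻ s, f s ∂x ≤ (∫⁻ s, f s ∂y) + C * d := by
  obtain ⟨u, hu, h1, h2⟩ := MeasureTheory.hahn_decomposition (μ := x) (ν := y)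
  have hle : y.restrict u ≤ x.restrict u := by
    refine Measure.le_iff.2 fun t ht => ?_
    rw [Measure.restrict_apply ht, Measure.restrict_apply ht]
    exact h1 _ (ht.inter hu) Set.inter_subset_right
  have hle' : x.restrict uᶜ ≤ y.restrict uᶜ := by
    refine Measure.le_iff.2 fun t ht => ?_
    rw [Measure.restrict_apply ht, Measure.restrict_apply ht]
    exact h2 _ (ht.inter hu.compl) Set.inter_subset_right
  have hsub : ∫⁻ s, f s ∂(x.restrict u - y.restrict u) ≤ C * d := by
    calc ∫⁻ s, f s ∂(x.restrict u - y.restrict u)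
        ≤ ∫⁻ _, C ∂(x.restrict u - y.restrict u) := lintegral_mono hC
      _ = C * (x.restrict u - y.restrict u) Set.univ := lintegral_const C
      _ ≤ C * d := by
          apply mul_le_mul_right
          rw [Measure.sub_apply MeasurableSet.univ hle, Measure.restrict_apply_univ,
            Measure.restrict_apply_univ]
          exact tsub_le_iff_left.2 (h u hu)
  have hu_split : ∫⁻ s in u, f s ∂x ≤ ∫⁻ s in u, f s ∂y + C * d := by
    calc ∫⁻ s in u, f s ∂x
        = ∫⁻ s, f s ∂(x.restrict u - y.restrict u) + ∫⁻ s in u, f s ∂y := by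
          conv_lhs => rw [← Measure.sub_add_cancel_of_le hle]
          exact lintegral_add_measure f _ _
      _ ≤ C * d + ∫⁻ s in u, f s ∂y := add_le_add hsub le_rfl
      _ = ∫⁻ s in u, f s ∂y + C * d := add_comm _ _
  calc ∫⁻ s, f s ∂x = ∫⁻ s in u, f s ∂x + ∫⁻ s in uᶜ, f s ∂x :=
        (lintegral_add_compl f hu).symm
    _ ≤ (∫⁻ s in u, f s ∂y + C * d) + ∫⁻ s in uᶜ, f s ∂y :=
        add_le_add hu_split (lintegral_mono' hle' le_rfl)
    _ = (∫⁻ s in u, f s ∂y + ∫⁻ s in uᶜ, f s ∂y) + C * d := by ring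
    _ = (∫⁻ s, f s ∂y) + C * d := by rw [lintegral_add_compl f hu]

/-- From `tvDist x y < δ` extract measure comparisons. -/
lemma tvDist_bound {x y : Measure S} [IsFiniteMeasure x] [IsFiniteMeasure y]
    {δ : ℝ} (h : tvDist x y < δ) (F : Set S) (hF : MeasurableSet F) :
    x F ≤ y F + ENNReal.ofReal δ ∧ y F ≤ x F + ENNReal.ofReal δ := by
  set s1 := {d : ℝ | ∃ F : Set S, MeasurableSet F ∧ d = (x F).toReal - (y F).toReal} with hs1def
  set s2 := {d : ℝ | ∃ F : Set S, MeasurableSet F ∧ d = (y F).toReal - (x F).toReal} with hs2def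
  have hb1 : BddAbove s1 := by
    refine ⟨(x Set.univ).toReal, ?_⟩
    rintro d ⟨G, hG, rfl⟩
    have h1 : (x G).toReal ≤ (x Set.univ).toReal :=
      ENNReal.toReal_mono (measure_ne_top x _) (measure_mono (Set.subset_univ _))
    have h0 : 0 ≤ (y G).toReal := ENNReal.toReal_nonneg
    linarith
  have hb2 : BddAbove s2 := by
    refine ⟨(y Set.univ).toReal, ?_⟩
    rintro d ⟨G, hG, rfl⟩
    have h1 : (y G).toReal ≤ (y Set.univ).toReal :=
      ENNReal.toReal_mono (measure_ne_top y _) (measure_mono (Set.subset_univ _))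
    have h0 : 0 ≤ (x G).toReal := ENNReal.toReal_nonneg
    linarith
  have h01 : (0 : ℝ) ∈ s1 := ⟨∅, MeasurableSet.empty, by simp⟩
  have h02 : (0 : ℝ) ∈ s2 := ⟨∅, MeasurableSet.empty, by simp⟩
  have hs1 : (x F).toReal - (y F).toReal ≤ sSup s1 := le_csSup hb1 ⟨F, hF, rfl⟩
  have hs2 : (y F).toReal - (x F).toReal ≤ sSup s2 := le_csSup hb2 ⟨F, hF, rfl⟩
  have hs1' : (0 : ℝ) ≤ sSup s1 := le_csSup hb1 h01
  have hs2' : (0 : ℝ) ≤ sSup s2 := le_csSup hb2 h02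
  have hsum : sSup s1 + sSup s2 < δ := h
  constructor
  · have hr : (x F).toReal ≤ (y F).toReal + δ := by linarith
    calc x F = ENNReal.ofReal (x F).toReal := (ENNReal.ofReal_toReal (measure_ne_top x F)).symm
      _ ≤ ENNReal.ofReal ((y F).toReal + δ) := ENNReal.ofReal_le_ofReal hr
      _ ≤ ENNReal.ofReal (y F).toReal + ENNReal.ofReal δ := ENNReal.ofReal_add_le
      _ = y F + ENNReal.ofReal δ := by rw [ENNReal.ofReal_toReal (measure_ne_top y F)]
  · have hr : (y F).toReal ≤ (x F).toReal + δ := by linarith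
    calc y F = ENNReal.ofReal (y F).toReal := (ENNReal.ofReal_toReal (measure_ne_top y F)).symm
      _ ≤ ENNReal.ofReal ((x F).toReal + δ) := ENNReal.ofReal_le_ofReal hr
      _ ≤ ENNReal.ofReal (x F).toReal + ENNReal.ofReal δ := ENNReal.ofReal_add_le
      _ = x F + ENNReal.ofReal δ := by rw [ENNReal.ofReal_toReal (measure_ne_top x F)]

/-- Upper bound for `tvDist` from a uniform bound on set differences. -/
lemma tvDist_le {z₁ z₂ : Measure S} {c : ℝ} (hc : 0 ≤ c)
    (h : ∀ F : Set S, MeasurableSet F → (z₁ F).toReal - (z₂ F).toReal ≤ c ∧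
      (z₂ F).toReal - (z₁ F).toReal ≤ c) :
    tvDist z₁ z₂ ≤ 2 * c := by
  unfold tvDist
  have h1 : sSup {d : ℝ | ∃ F : Set S, MeasurableSet F ∧ d = (z₁ F).toReal - (z₂ F).toReal}
      ≤ c := Real.sSup_le (by rintro d ⟨G, hG, rfl⟩; exact (h G hG).1) hc
  have h2 : sSup {d : ℝ | ∃ F : Set S, MeasurableSet F ∧ d = (z₂ F).toReal - (z₁ F).toReal}
      ≤ c := Real.sSup_le (by rintro d ⟨G, hG, rfl⟩; exact (h G hG).2) hc
  linarith

end Aux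

section Ker

variable {S A : Type*} [MeasurableSpace S] [MeasurableSpace A]
  (lam : Measure S) [SigmaFinite lam]
  (p : S → S → ℝ≥0) (q : S → A → ℝ≥0)

lemma meas_prod_ker (hpm : Measurable fun z : S × S => p z.1 z.2)
    (hqm : Measurable fun z : S × A => q z.1 z.2) (a : A) :
    Measurable fun z : S × S => (p z.1 z.2 : ℝ≥0∞) * (q z.2 a : ℝ≥0∞) := by
  refine Measurable.mul (f := fun z : S × S => (p z.1 z.2 : ℝ≥0∞))
    (g := fun z : S × S => (q z.2 a : ℝ≥0∞)) ?_ ?_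
  · exact measurable_coe_nnreal_ennreal.comp hpm
  · exact measurable_coe_nnreal_ennreal.comp
      (hqm.comp (measurable_snd.prodMk measurable_const))

lemma meas_g (hpm : Measurable fun z : S × S => p z.1 z.2)
    (hqm : Measurable fun z : S × A => q z.1 z.2) (a : A) (F : Set S) :
    Measurable fun s => ∫⁻ t in F, (p s t : ℝ≥0∞) * (q t a : ℝ≥0∞) ∂lam :=
  Measurable.lintegral_prod_right' (meas_prod_ker p q hpm hqm a)

lemma xMpq_apply (hpm : Measurable fun z : S × S => p z.1 z.2)
    (hqm : Measurable fun z : S × A => q z.1 z.2)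
    (x : Measure S) (a : A) {F : Set S} (hF : MeasurableSet F) :
    xMpq lam p q x a F = ∫⁻ s, ∫⁻ t in F, (p s t : ℝ≥0∞) * (q t a : ℝ≥0∞) ∂lam ∂x := by
  have hm : Measurable fun s => lam.withDensity fun t => (p s t : ℝ≥0∞) * (q t a : ℝ≥0∞) := by
    apply Measure.measurable_of_measurable_coe
    intro G hG
    simp_rw [withDensity_apply _ hG]
    exact meas_g lam p q hpm hqm a G
  rw [xMpq, Measure.bind_apply hF hm.aemeasurable]
  simp_rw [withDensity_apply _ hF]

lemma g_le {Cq : ℝ≥0} (hqb : ∀ t a, q t a ≤ Cq) (hpn : ∀ s, ∫⁻ t, (p s t : ℝ≥0∞) ∂lam = 1)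
    (a : A) (F : Set S) (s : S) :
    ∫⁻ t in F, (p s t : ℝ≥0∞) * (q t a : ℝ≥0∞) ∂lam ≤ (Cq : ℝ≥0∞) := by
  calc ∫⁻ t in F, (p s t : ℝ≥0∞) * (q t a : ℝ≥0∞) ∂lam
      ≤ ∫⁻ t, (p s t : ℝ≥0∞) * (Cq : ℝ≥0∞) ∂lam := by
        refine (setLIntegral_le_lintegral F _).trans (lintegral_mono fun t => ?_)
        exact mul_le_mul_right (ENNReal.coe_le_coe.2 (hqb t a)) _
    _ = (∫⁻ t, (p s t : ℝ≥0∞) ∂lam) * (Cq : ℝ≥0∞) := lintegral_mul_const' _ _ ENNReal.coe_ne_top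
    _ = (Cq : ℝ≥0∞) := by rw [hpn s, one_mul]

/-- pointwise comparison of the kernels at two parameters. -/
lemma g_comp {Cp Cq : ℝ≥0}
    (hpm : Measurable fun z : S × S => p z.1 z.2)
    (hqm : Measurable fun z : S × A => q z.1 z.2)
    (hpb : ∀ s t, p s t ≤ Cp) (hqb : ∀ t a, q t a ≤ Cq)
    (hpn : ∀ s, ∫⁻ t, (p s t : ℝ≥0∞) ∂lam = 1)
    (a b : A) (e e' : ℝ≥0∞)
    (hsd : lam ({t | 0 < q t a} ∆ {t | 0 < q t b}) ≤ e)
    (hq : ∀ t ∈ {t | 0 < q t a} ∩ {t | 0 < q t b}, (q t a : ℝ≥0∞) ≤ (q t b : ℝ≥0∞) + e')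
    (he' : e' ≠ ∞)
    {F : Set S} (hF : MeasurableSet F) (s : S) :
    ∫⁻ t in F, (p s t : ℝ≥0∞) * (q t a : ℝ≥0∞) ∂lam ≤
      (∫⁻ t in F, (p s t : ℝ≥0∞) * (q t b : ℝ≥0∞) ∂lam) + (e' + (Cp : ℝ≥0∞) * Cq * e) := by
  set Sa := {t | 0 < q t a} with hSa_def
  set Sb := {t | 0 < q t b} with hSb_def
  have hqa_meas : ∀ c : A, Measurable fun t => q t c := fun c =>
    hqm.comp (measurable_id.prodMk measurable_const)
  have hSa : MeasurableSet Sa := (hqa_meas a) measurableSet_Ioi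
  have hSb : MeasurableSet Sb := (hqa_meas b) measurableSet_Ioi
  have hpsm : Measurable fun t => (p s t : ℝ≥0∞) :=
    measurable_coe_nnreal_ennreal.comp (hpm.comp (measurable_const.prodMk measurable_id))
  have hsplit : F ⊆ (F ∩ (Sa ∩ Sb)) ∪ ((F ∩ (Sa \ Sb)) ∪ (F \ Sa)) := by
    intro t ht
    by_cases h1 : t ∈ Sa
    · by_cases h2 : t ∈ Sb
      · exact Or.inl ⟨ht, h1, h2⟩
      · exact Or.inr (Or.inl ⟨ht, h1, h2⟩)
    · exact Or.inr (Or.inr ⟨ht, h1⟩)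
  have hstep : ∫⁻ t in F, (p s t : ℝ≥0∞) * (q t a : ℝ≥0∞) ∂lam ≤
      ∫⁻ t in F ∩ (Sa ∩ Sb), (p s t : ℝ≥0∞) * (q t a : ℝ≥0∞) ∂lam +
      (∫⁻ t in F ∩ (Sa \ Sb), (p s t : ℝ≥0∞) * (q t a : ℝ≥0∞) ∂lam +
        ∫⁻ t in F \ Sa, (p s t : ℝ≥0∞) * (q t a : ℝ≥0∞) ∂lam) :=
    (lintegral_mono_set hsplit).trans
      ((lintegral_union_le _ _ _).trans (add_le_add_right (lintegral_union_le _ _ _) _))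
  have T1 : ∫⁻ t in F ∩ (Sa ∩ Sb), (p s t : ℝ≥0∞) * (q t a : ℝ≥0∞) ∂lam ≤
      (∫⁻ t in F, (p s t : ℝ≥0∞) * (q t b : ℝ≥0∞) ∂lam) + e' := by
    have step1 : ∫⁻ t in F ∩ (Sa ∩ Sb), (p s t : ℝ≥0∞) * (q t a : ℝ≥0∞) ∂lam ≤
        ∫⁻ t in F ∩ (Sa ∩ Sb), ((p s t : ℝ≥0∞) * (q t b : ℝ≥0∞) + (p s t : ℝ≥0∞) * e') ∂lam := by
      refine setLIntegral_mono' (hF.inter (hSa.inter hSb)) fun t ht => ?_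
      calc (p s t : ℝ≥0∞) * (q t a : ℝ≥0∞) ≤ (p s t : ℝ≥0∞) * ((q t b : ℝ≥0∞) + e') :=
            mul_le_mul_right (hq t ht.2) _
        _ = (p s t : ℝ≥0∞) * (q t b : ℝ≥0∞) + (p s t : ℝ≥0∞) * e' := mul_add _ _ _
    refine step1.trans ?_
    rw [lintegral_add_left (f := fun t => (p s t : ℝ≥0∞) * (q t b : ℝ≥0∞)) (hpsm.mul ((hqa_meas b).coe_nnreal_ennreal))]
    refine add_le_add (lintegral_mono_set Set.inter_subset_left) ?_
    calc ∫⁻ t in F ∩ (Sa ∩ Sb), (p s t : ℝ≥0∞) * e' ∂lam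
        ≤ ∫⁻ t, (p s t : ℝ≥0∞) * e' ∂lam := setLIntegral_le_lintegral _ _
      _ = (∫⁻ t, (p s t : ℝ≥0∞) ∂lam) * e' := lintegral_mul_const' _ _ he'
      _ = e' := by rw [hpn s, one_mul]
  have T2 : ∫⁻ t in F ∩ (Sa \ Sb), (p s t : ℝ≥0∞) * (q t a : ℝ≥0∞) ∂lam ≤
      (Cp : ℝ≥0∞) * Cq * e := by
    calc ∫⁻ t in F ∩ (Sa \ Sb), (p s t : ℝ≥0∞) * (q t a : ℝ≥0∞) ∂lam
        ≤ ∫⁻ _ in F ∩ (Sa \ Sb), ((Cp : ℝ≥0∞) * (Cq : ℝ≥0∞)) ∂lam :=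
          lintegral_mono fun t =>
            mul_le_mul' (ENNReal.coe_le_coe.2 (hpb s t)) (ENNReal.coe_le_coe.2 (hqb t a))
      _ = (Cp : ℝ≥0∞) * Cq * lam (F ∩ (Sa \ Sb)) := setLIntegral_const _ _
      _ ≤ (Cp : ℝ≥0∞) * Cq * e := by
          apply mul_le_mul_right
          refine le_trans (measure_mono (Set.inter_subset_right.trans ?_)) hsd
          rw [Set.symmDiff_def]
          exact Set.subset_union_left
  have T3 : ∫⁻ t in F \ Sa, (p s t : ℝ≥0∞) * (q t a : ℝ≥0∞) ∂lam = 0 := by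
    have hz : ∀ t ∈ F \ Sa, (p s t : ℝ≥0∞) * (q t a : ℝ≥0∞) = (fun _ => (0 : ℝ≥0∞)) t := by
      intro t ht
      have hq0 : q t a = 0 := by
        by_contra h0
        exact ht.2 (pos_iff_ne_zero.2 h0)
      simp [hq0]
    calc ∫⁻ t in F \ Sa, (p s t : ℝ≥0∞) * (q t a : ℝ≥0∞) ∂lam
        = ∫⁻ _ in F \ Sa, (0 : ℝ≥0∞) ∂lam :=
          setLIntegral_congr_fun (hF.diff hSa) hz
      _ = 0 := lintegral_zero
  calc ∫⁻ t in F, (p s t : ℝ≥0∞) * (q t a : ℝ≥0∞) ∂lam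
      ≤ ∫⁻ t in F ∩ (Sa ∩ Sb), (p s t : ℝ≥0∞) * (q t a : ℝ≥0∞) ∂lam +
        (∫⁻ t in F ∩ (Sa \ Sb), (p s t : ℝ≥0∞) * (q t a : ℝ≥0∞) ∂lam +
          ∫⁻ t in F \ Sa, (p s t : ℝ≥0∞) * (q t a : ℝ≥0∞) ∂lam) := hstep
    _ ≤ ((∫⁻ t in F, (p s t : ℝ≥0∞) * (q t b : ℝ≥0∞) ∂lam) + e') +
        ((Cp : ℝ≥0∞) * Cq * e + 0) := add_le_add T1 (add_le_add T2 T3.le)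
    _ = (∫⁻ t in F, (p s t : ℝ≥0∞) * (q t b : ℝ≥0∞) ∂lam) + (e' + (Cp : ℝ≥0∞) * Cq * e) := by
        ring

end Ker

/-- Under the stated continuity assumption on `q`, the map
`(x, a) ↦ xM_a` is jointly continuous from (finite nonnegative measures `≪ λ` with the
total variation distance) × `(A, ϱ)` into the finite measures with the total variation
distance. -/
theorem stmt_17 {S A : Type*}
    [MetricSpace S] [CompleteSpace S] [TopologicalSpace.SeparableSpace S]
    [MeasurableSpace S] [BorelSpace S]
    [MetricSpace A] [CompleteSpace A] [TopologicalSpace.SeparableSpace A]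
    [MeasurableSpace A] [BorelSpace A]
    (lam : Measure S) [SigmaFinite lam] (τ : Measure A) [SigmaFinite τ]
    (p : S → S → ℝ≥0) (hpm : Measurable fun z : S × S => p z.1 z.2)
    (hpb : ∃ C : ℝ≥0, ∀ s t, p s t ≤ C)
    (hpn : ∀ s, ∫⁻ t, (p s t : ℝ≥0∞) ∂lam = 1)
    (q : S → A → ℝ≥0) (hqm : Measurable fun z : S × A => q z.1 z.2)
    (hqb : ∃ C : ℝ≥0, ∀ t a, q t a ≤ C)
    (hqn : ∀ t, ∫⁻ a, (q t a : ℝ≥0∞) ∂τ = 1)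
    (hSpos : ∀ a : A, 0 < lam {t | 0 < q t a})
    (hcont : ∀ ε : ℝ, 0 < ε → ∃ η : ℝ, 0 < η ∧ ∀ a b : A, dist a b < η →
      lam ({t | 0 < q t a} ∆ {t | 0 < q t b}) < ENNReal.ofReal ε ∧
      ∀ t ∈ {t | 0 < q t a} ∩ {t | 0 < q t b}, |(q t a : ℝ) - (q t b : ℝ)| < ε) :
    ∀ x : Measure S, IsFiniteMeasure x → x ≪ lam → ∀ a : A, ∀ ε : ℝ, 0 < ε →
      ∃ δ : ℝ, 0 < δ ∧ ∀ y : Measure S, IsFiniteMeasure y → y ≪ lam →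
        tvDist x y < δ → ∀ b : A, dist a b < δ →
          tvDist (xMpq lam p q x a) (xMpq lam p q y b) < ε := by
  obtain ⟨Cp, hCp⟩ := hpb
  obtain ⟨Cq, hCq⟩ := hqb
  intro x hx hxl a ε hε
  haveI := hx
  set Xr := (x Set.univ).toReal with hXrdef
  have hXr0 : 0 ≤ Xr := ENNReal.toReal_nonneg
  set K : ℝ := (Cp : ℝ) * (Cq : ℝ) + 1 with hKdef
  have hK1 : 1 ≤ K := by
    have : (0 : ℝ) ≤ (Cp : ℝ) * (Cq : ℝ) := by positivity
    linarith
  have hK0 : 0 < K := by linarith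
  set ε' : ℝ := ε / (10 * (Xr + 1) * K) with hε'def
  have hε' : 0 < ε' := by
    apply div_pos hε
    positivity
  obtain ⟨η, hη0, hηc⟩ := hcont ε' hε'
  set δ : ℝ := min η (min 1 (ε / (10 * ((Cq : ℝ) + 1)))) with hδdef
  have hCq0 : (0 : ℝ) < (Cq : ℝ) + 1 := by positivity
  have hδ0 : 0 < δ := lt_min hη0 (lt_min one_pos (by positivity))
  refine ⟨δ, hδ0, ?_⟩
  intro y hy hyl htv b hb
  haveI := hy
  obtain ⟨hsd0, hqd⟩ := hηc a b (hb.trans_le (min_le_left _ _))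
  have hsd : lam ({t | 0 < q t a} ∆ {t | 0 < q t b}) ≤ ENNReal.ofReal ε' := hsd0.le
  have hsd' : lam ({t | 0 < q t b} ∆ {t | 0 < q t a}) ≤ ENNReal.ofReal ε' := by
    rwa [symmDiff_comm]
  have hq1 : ∀ t ∈ {t | 0 < q t a} ∩ {t | 0 < q t b},
      (q t a : ℝ≥0∞) ≤ (q t b : ℝ≥0∞) + ENNReal.ofReal ε' := by
    intro t ht
    have habs := abs_lt.1 (hqd t ht)
    have hr : (q t a : ℝ) ≤ (q t b : ℝ) + ε' := by linarith [habs.2]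
    calc (q t a : ℝ≥0∞) = ENNReal.ofReal (q t a : ℝ) := ENNReal.ofReal_coe_nnreal.symm
      _ ≤ ENNReal.ofReal ((q t b : ℝ) + ε') := ENNReal.ofReal_le_ofReal hr
      _ ≤ ENNReal.ofReal (q t b : ℝ) + ENNReal.ofReal ε' := ENNReal.ofReal_add_le
      _ = (q t b : ℝ≥0∞) + ENNReal.ofReal ε' := by rw [ENNReal.ofReal_coe_nnreal]
  have hq2 : ∀ t ∈ {t | 0 < q t b} ∩ {t | 0 < q t a},
      (q t b : ℝ≥0∞) ≤ (q t a : ℝ≥0∞) + ENNReal.ofReal ε' := by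
    intro t ht
    have habs := abs_lt.1 (hqd t ⟨ht.2, ht.1⟩)
    have hr : (q t b : ℝ) ≤ (q t a : ℝ) + ε' := by linarith [habs.1]
    calc (q t b : ℝ≥0∞) = ENNReal.ofReal (q t b : ℝ) := ENNReal.ofReal_coe_nnreal.symm
      _ ≤ ENNReal.ofReal ((q t a : ℝ) + ε') := ENNReal.ofReal_le_ofReal hr
      _ ≤ ENNReal.ofReal (q t a : ℝ) + ENNReal.ofReal ε' := ENNReal.ofReal_add_le
      _ = (q t a : ℝ≥0∞) + ENNReal.ofReal ε' := by rw [ENNReal.ofReal_coe_nnreal]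
  set err : ℝ≥0∞ := ENNReal.ofReal ε' + (Cp : ℝ≥0∞) * Cq * ENNReal.ofReal ε' with herrdef
  have hxy := fun F hF => tvDist_bound htv F hF
  -- key ENNReal bounds
  have key : ∀ F : Set S, MeasurableSet F →
      xMpq lam p q x a F ≤ xMpq lam p q y b F
          + ((Cq : ℝ≥0∞) * ENNReal.ofReal δ + err * y Set.univ) ∧
      xMpq lam p q y b F ≤ xMpq lam p q x a F
          + ((Cq : ℝ≥0∞) * ENNReal.ofReal δ + err * x Set.univ) := by
    intro F hF
    rw [xMpq_apply lam p q hpm hqm x a hF, xMpq_apply lam p q hpm hqm y b hF]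
    constructor
    · calc ∫⁻ s, ∫⁻ t in F, (p s t : ℝ≥0∞) * (q t a : ℝ≥0∞) ∂lam ∂x
          ≤ (∫⁻ s, ∫⁻ t in F, (p s t : ℝ≥0∞) * (q t a : ℝ≥0∞) ∂lam ∂y)
              + (Cq : ℝ≥0∞) * ENNReal.ofReal δ :=
            aux_lint_le _ (fun G hG => (hxy G hG).1) _ (g_le lam p q hCq hpn a F)
        _ ≤ (∫⁻ s, ((∫⁻ t in F, (p s t : ℝ≥0∞) * (q t b : ℝ≥0∞) ∂lam) + err) ∂y)
              + (Cq : ℝ≥0∞) * ENNReal.ofReal δ := by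
            refine add_le_add_left (lintegral_mono fun s => ?_) _
            exact g_comp lam p q hpm hqm hCp hCq hpn a b _ _ hsd hq1 ENNReal.ofReal_ne_top hF s
        _ = (∫⁻ s, ∫⁻ t in F, (p s t : ℝ≥0∞) * (q t b : ℝ≥0∞) ∂lam ∂y) + err * y Set.univ
              + (Cq : ℝ≥0∞) * ENNReal.ofReal δ := by
            rw [lintegral_add_right _ measurable_const, lintegral_const]
        _ = (∫⁻ s, ∫⁻ t in F, (p s t : ℝ≥0∞) * (q t b : ℝ≥0∞) ∂lam ∂y)
              + ((Cq : ℝ≥0∞) * ENNReal.ofReal δ + err * y Set.univ) := by ring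
    · calc ∫⁻ s, ∫⁻ t in F, (p s t : ℝ≥0∞) * (q t b : ℝ≥0∞) ∂lam ∂y
          ≤ (∫⁻ s, ∫⁻ t in F, (p s t : ℝ≥0∞) * (q t b : ℝ≥0∞) ∂lam ∂x)
              + (Cq : ℝ≥0∞) * ENNReal.ofReal δ :=
            aux_lint_le _ (fun G hG => (hxy G hG).2) _ (g_le lam p q hCq hpn b F)
        _ ≤ (∫⁻ s, ((∫⁻ t in F, (p s t : ℝ≥0∞) * (q t a : ℝ≥0∞) ∂lam) + err) ∂x)
              + (Cq : ℝ≥0∞) * ENNReal.ofReal δ := by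
            refine add_le_add_left (lintegral_mono fun s => ?_) _
            exact g_comp lam p q hpm hqm hCp hCq hpn b a _ _ hsd' hq2 ENNReal.ofReal_ne_top hF s
        _ = (∫⁻ s, ∫⁻ t in F, (p s t : ℝ≥0∞) * (q t a : ℝ≥0∞) ∂lam ∂x) + err * x Set.univ
              + (Cq : ℝ≥0∞) * ENNReal.ofReal δ := by
            rw [lintegral_add_right _ measurable_const, lintegral_const]
        _ = (∫⁻ s, ∫⁻ t in F, (p s t : ℝ≥0∞) * (q t a : ℝ≥0∞) ∂lam ∂x)
              + ((Cq : ℝ≥0∞) * ENNReal.ofReal δ + err * x Set.univ) := by ring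
  -- numeric bound
  have hδ1 : δ ≤ 1 := le_trans (min_le_right _ _) (min_le_left _ _)
  have hδε : δ ≤ ε / (10 * ((Cq : ℝ) + 1)) := le_trans (min_le_right _ _) (min_le_right _ _)
  have hyuniv : y Set.univ ≤ x Set.univ + ENNReal.ofReal δ := (hxy Set.univ MeasurableSet.univ).2
  have hxuniv : x Set.univ ≤ x Set.univ + ENNReal.ofReal δ := le_self_add
  have hbound : (Cq : ℝ≥0∞) * ENNReal.ofReal δ + err * (x Set.univ + ENNReal.ofReal δ)
      ≤ ENNReal.ofReal (ε / 5) := by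
    have hreal : (Cq : ℝ) * δ + ε' * K * (Xr + δ) ≤ ε / 5 := by
      have h1 : (Cq : ℝ) * δ ≤ ε / 10 := by
        have hA : ((Cq : ℝ) + 1) * δ ≤ ((Cq : ℝ) + 1) * (ε / (10 * ((Cq : ℝ) + 1))) :=
          mul_le_mul_of_nonneg_left hδε hCq0.le
        have heq : ((Cq : ℝ) + 1) * (ε / (10 * ((Cq : ℝ) + 1))) = ε / 10 := by
          field_simp
        have hB : ((Cq : ℝ) + 1) * δ = (Cq : ℝ) * δ + δ := by ring
        rw [heq] at hA
        linarith [hδ0.le]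
      have h2 : ε' * K * (Xr + δ) ≤ ε / 10 := by
        have hA : ε' * K * (Xr + δ) ≤ ε' * K * (Xr + 1) := by
          have h0 : 0 ≤ ε' * K := by positivity
          exact mul_le_mul_of_nonneg_left (by linarith) h0
        have heq : ε' * K * (Xr + 1) = ε / 10 := by
          rw [hε'def]
          field_simp
        exact hA.trans heq.le
      linarith
    have e1 : (Cq : ℝ≥0∞) * ENNReal.ofReal δ = ENNReal.ofReal ((Cq : ℝ) * δ) := by
      rw [ENNReal.ofReal_mul Cq.coe_nonneg, ENNReal.ofReal_coe_nnreal]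
    have e2 : err = ENNReal.ofReal (ε' * K) := by
      have hh : ε' * K = ε' + (Cp : ℝ) * (Cq : ℝ) * ε' := by rw [hKdef]; ring
      rw [herrdef, hh, ENNReal.ofReal_add hε'.le (by positivity)]
      congr 1
      rw [ENNReal.ofReal_mul (by positivity), ENNReal.ofReal_mul Cp.coe_nonneg,
        ENNReal.ofReal_coe_nnreal, ENNReal.ofReal_coe_nnreal]
    have exuniv : x Set.univ = ENNReal.ofReal Xr :=
      (ENNReal.ofReal_toReal (measure_ne_top x _)).symm
    calc (Cq : ℝ≥0∞) * ENNReal.ofReal δ + err * (x Set.univ + ENNReal.ofReal δ)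
        = ENNReal.ofReal ((Cq : ℝ) * δ)
            + ENNReal.ofReal (ε' * K) * ENNReal.ofReal (Xr + δ) := by
          rw [e1, e2, exuniv, ← ENNReal.ofReal_add hXr0 hδ0.le]
      _ = ENNReal.ofReal ((Cq : ℝ) * δ + ε' * K * (Xr + δ)) := by
          rw [← ENNReal.ofReal_mul (by positivity),
            ← ENNReal.ofReal_add (by positivity) (by positivity)]
      _ ≤ ENNReal.ofReal (ε / 5) := ENNReal.ofReal_le_ofReal hreal
  have hfin : ∀ (z : Measure S) (c : A), IsFiniteMeasure z → ∀ F : Set S, MeasurableSet F →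
      xMpq lam p q z c F ≠ ⊤ := by
    intro z c hz F hF
    haveI := hz
    rw [xMpq_apply lam p q hpm hqm z c hF]
    have hle : ∫⁻ s, ∫⁻ t in F, (p s t : ℝ≥0∞) * (q t c : ℝ≥0∞) ∂lam ∂z
        ≤ (Cq : ℝ≥0∞) * z Set.univ := by
      calc ∫⁻ s, ∫⁻ t in F, (p s t : ℝ≥0∞) * (q t c : ℝ≥0∞) ∂lam ∂z
          ≤ ∫⁻ _, (Cq : ℝ≥0∞) ∂z := lintegral_mono (g_le lam p q hCq hpn c F)
        _ = (Cq : ℝ≥0∞) * z Set.univ := lintegral_const _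
    exact ne_top_of_le_ne_top (ENNReal.mul_ne_top ENNReal.coe_ne_top (measure_ne_top z _)) hle
  have final : ∀ F : Set S, MeasurableSet F →
      (xMpq lam p q x a F).toReal - (xMpq lam p q y b F).toReal ≤ ε / 5 ∧
      (xMpq lam p q y b F).toReal - (xMpq lam p q x a F).toReal ≤ ε / 5 := by
    intro F hF
    obtain ⟨k1, k2⟩ := key F hF
    have hb1 : xMpq lam p q x a F ≤ xMpq lam p q y b F + ENNReal.ofReal (ε / 5) :=
      k1.trans (add_le_add_right
        ((add_le_add_right (mul_le_mul_right hyuniv _) _).trans hbound) _)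
    have hb2 : xMpq lam p q y b F ≤ xMpq lam p q x a F + ENNReal.ofReal (ε / 5) :=
      k2.trans (add_le_add_right
        ((add_le_add_right (mul_le_mul_right hxuniv _) _).trans hbound) _)
    have t1 : (xMpq lam p q x a F).toReal ≤ (xMpq lam p q y b F).toReal + ε / 5 := by
      have ht := ENNReal.toReal_mono
        (ENNReal.add_ne_top.2 ⟨hfin y b hy F hF, ENNReal.ofReal_ne_top⟩) hb1
      rwa [ENNReal.toReal_add (hfin y b hy F hF) ENNReal.ofReal_ne_top,
        ENNReal.toReal_ofReal (by positivity)] at ht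
    have t2 : (xMpq lam p q y b F).toReal ≤ (xMpq lam p q x a F).toReal + ε / 5 := by
      have ht := ENNReal.toReal_mono
        (ENNReal.add_ne_top.2 ⟨hfin x a hx F hF, ENNReal.ofReal_ne_top⟩) hb2
      rwa [ENNReal.toReal_add (hfin x a hx F hF) ENNReal.ofReal_ne_top,
        ENNReal.toReal_ofReal (by positivity)] at ht
    exact ⟨by linarith, by linarith⟩
  have hfinal := tvDist_le (c := ε / 5) (by positivity) final
  linarith
end
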